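/- arXiv:1711.02745 — 7 statements merged into one kernel-verified Lean document; each statement's English description precedes it below -/
import Mathlib

section
/- Let (Y(d,𝐝))_{d∈{0,1},𝐝∈{0,1}^n} be real-valued random variables and (D, 𝐃) a random element of {0,1} × {0,1}^n, with observed outcome Y = Y(D,𝐃). Assume (i) for all (d,𝐝), Y(d,𝐝) is independent of (D,𝐃); (ii) exchangeability: E[Y(d,𝐝)] = μ(d, Σ_j d_j) for some function μ. Let S = Σ_j D_j. Then for any (d,s) with P[D=d, S=s] > 0, E[Y | D=d, S=s] = μ(d,s). -/
open MeasureTheory ProbabilityTheory Finset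
open scoped ProbabilityTheory

/-- Lemma 2 (Identification under exchangeability): under random assignment and
exchangeability, the conditional mean of the observed outcome given own treatment
`d` and number of treated neighbors `s` equals `μ d s`. -/
theorem stmt_1 {Ω : Type*} [MeasureSpace Ω] [IsProbabilityMeasure (ℙ : Measure Ω)]
    (n : ℕ) (Y : Bool → (Fin n → Bool) → Ω → ℝ)
    (D : Ω → Bool) (Dvec : Ω → Fin n → Bool)
    (hYmeas : ∀ d v, Measurable (Y d v)) (hDmeas : Measurable D)
    (hDvecmeas : Measurable Dvec)
    (hint : ∀ d v, Integrable (Y d v))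
    (hindep : ∀ d v, IndepFun (Y d v) (fun ω => (D ω, Dvec ω)) ℙ)
    (μf : Bool → ℕ → ℝ)
    (hexch : ∀ d v, (∫ ω, Y d v ω) =
      μf d ((Finset.univ.filter (fun j => v j = true)).card))
    (Yobs : Ω → ℝ) (hobs : ∀ ω, Yobs ω = Y (D ω) (Dvec ω) ω)
    (d : Bool) (s : ℕ)
    (hpos : 0 < ℙ {ω | D ω = d ∧
      (Finset.univ.filter (fun j => Dvec ω j = true)).card = s}) :
    (∫ ω in {ω | D ω = d ∧
        (Finset.univ.filter (fun j => Dvec ω j = true)).card = s}, Yobs ω) /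
      (ℙ {ω | D ω = d ∧
        (Finset.univ.filter (fun j => Dvec ω j = true)).card = s}).toReal
      = μf d s := by
  classical
  set E : Set Ω := {ω | D ω = d ∧
      (Finset.univ.filter (fun j => Dvec ω j = true)).card = s} with hE
  set V : Finset (Fin n → Bool) :=
    Finset.univ.filter (fun v => (Finset.univ.filter (fun j => v j = true)).card = s) with hV
  set A : (Fin n → Bool) → Set Ω := fun v => {ω | D ω = d ∧ Dvec ω = v} with hA
  have hAmeas : ∀ v, MeasurableSet (A v) := by
    intro v
    have : A v = D ⁻¹' {d} ∩ Dvec ⁻¹' {v} := by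
      ext ω; simp [hA, Set.mem_setOf_eq]
    rw [this]
    exact (hDmeas (measurableSet_singleton d)).inter
      (hDvecmeas (measurableSet_singleton v))
  have hEeq : E = ⋃ v ∈ V, A v := by
    ext ω
    simp only [hE, hV, hA, Set.mem_setOf_eq, Set.mem_iUnion, Finset.mem_filter,
      Finset.mem_univ, true_and]
    constructor
    · rintro ⟨h1, h2⟩
      exact ⟨Dvec ω, h2, h1, rfl⟩
    · rintro ⟨v, hv, h1, h2⟩
      exact ⟨h1, h2 ▸ hv⟩
  have hdisj : (V : Set (Fin n → Bool)).Pairwise (Function.onFun Disjoint A) := by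
    intro v _ w _ hvw
    refine Set.disjoint_left.2 ?_
    rintro ω ⟨_, h1⟩ ⟨_, h2⟩
    exact hvw (h1 ▸ h2 ▸ rfl)
  have hEmeas : MeasurableSet E := by
    rw [hEeq]; exact MeasurableSet.biUnion V.countable_toSet (fun v _ => hAmeas v)
  -- key computation on each piece
  have key : ∀ v ∈ V, ∫ ω in A v, Y d v ω = μf d s * (ℙ (A v)).toReal := by
    intro v hv
    set g : Bool × (Fin n → Bool) → ℝ := Set.indicator {(d, v)} (fun _ => (1:ℝ)) with hg
    have hgmeas : Measurable g :=
      measurable_const.indicator (measurableSet_singleton _)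
    have hcomp : (fun ω => g (D ω, Dvec ω)) = (A v).indicator (fun _ => (1:ℝ)) := by
      ext ω
      by_cases h : D ω = d ∧ Dvec ω = v
      · have h1 : (D ω, Dvec ω) ∈ ({(d, v)} : Set (Bool × (Fin n → Bool))) := by
          simp [Prod.ext_iff, h.1, h.2]
        have h2 : ω ∈ A v := h
        simp only [hg, Set.indicator_of_mem h1, Set.indicator_of_mem h2]
      · have h1 : (D ω, Dvec ω) ∉ ({(d, v)} : Set (Bool × (Fin n → Bool))) := by
          simpa [Prod.ext_iff] using h
        have h2 : ω ∉ A v := h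
        simp only [hg, Set.indicator_of_notMem h1, Set.indicator_of_notMem h2]
    have hind : IndepFun (Y d v) ((A v).indicator (fun _ => (1:ℝ))) ℙ := by
      rw [← hcomp]
      exact (hindep d v).comp measurable_id hgmeas
    have hintind : Integrable ((A v).indicator (fun _ => (1:ℝ))) ℙ :=
      (integrable_const (1:ℝ)).indicator (hAmeas v)
    have hmul := hind.integral_fun_mul_eq_mul_integral (hint d v).aestronglyMeasurable hintind.aestronglyMeasurable
    have hprod : (fun ω => Y d v ω * (A v).indicator (fun _ => (1:ℝ)) ω)
        = (A v).indicator (Y d v) := by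
      ext ω
      by_cases h : ω ∈ A v
      · simp [Set.indicator_of_mem h]
      · simp [Set.indicator_of_notMem h]
    calc ∫ ω in A v, Y d v ω
        = ∫ ω, (A v).indicator (Y d v) ω := (integral_indicator (hAmeas v)).symm
      _ = ∫ ω, Y d v ω * (A v).indicator (fun _ => (1:ℝ)) ω := by rw [hprod]
      _ = (∫ ω, Y d v ω) * ∫ ω, (A v).indicator (fun _ => (1:ℝ)) ω := hmul
      _ = μf d s * (ℙ (A v)).toReal := by
          have hi1 : ∫ ω, (A v).indicator (fun _ => (1:ℝ)) ω = (ℙ (A v)).toReal := by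
            exact integral_indicator_one (hAmeas v)
          rw [hexch d v, hi1]
          have : (Finset.univ.filter (fun j => v j = true)).card = s := by
            simpa [hV] using hv
          rw [this]
  have hYobsInt : ∀ v ∈ V, IntegrableOn Yobs (A v) := by
    intro v _
    refine ((hint d v).integrableOn).congr_fun ?_ (hAmeas v)
    rintro ω ⟨h1, h2⟩
    rw [hobs ω, h1, h2]
  have hsplit : ∫ ω in E, Yobs ω = ∑ v ∈ V, ∫ ω in A v, Yobs ω := by
    rw [hEeq]
    exact integral_biUnion_finset V (fun v _ => hAmeas v) hdisj hYobsInt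
  have hpiece : ∀ v ∈ V, ∫ ω in A v, Yobs ω = μf d s * (ℙ (A v)).toReal := by
    intro v hv
    rw [← key v hv]
    apply setIntegral_congr_fun (hAmeas v)
    rintro ω ⟨h1, h2⟩
    rw [hobs ω, h1, h2]
  have hmeasE : (ℙ E).toReal = ∑ v ∈ V, (ℙ (A v)).toReal := by
    rw [hEeq, measure_biUnion_finset hdisj (fun v _ => hAmeas v)]
    exact ENNReal.toReal_sum (fun v _ => measure_ne_top _ _)
  have htotal : ∫ ω in E, Yobs ω = μf d s * (ℙ E).toReal := by
    rw [hsplit, hmeasE, Finset.mul_sum]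
    exact Finset.sum_congr rfl hpiece
  have hne : (ℙ E).toReal ≠ 0 :=
    ENNReal.toReal_ne_zero.2 ⟨hpos.ne', measure_ne_top _ _⟩
  rw [htotal, mul_div_assoc, div_self hne, mul_one]
end

section
/- Let (Y(d,𝐝))_{d,𝐝} be integrable random variables independent of the random assignment (D,𝐃) ∈ {0,1}×{0,1}^n, with Y = Y(D,𝐃) and S = Σ_j D_j. Then for any (d,s) with P[D=d,S=s] > 0, E[Y | D=d, S=s] = Σ_{𝐝: Σ_j d_j = s} E[Y(d,𝐝)] · P[D=d | 𝐃=𝐝] P[𝐃=𝐝] / (P[D=d | S=s] P[S=s]). Moreover, if the coordinates D, D_1, …, D_n are i.i.d. Bernoulli(p) with p ∈ (0,1), this reduces to E[Y | D=d, S=s] = C(n,s)^{-1} Σ_{𝐝: Σ_j d_j = s} E[Y(d,𝐝)], where C(n,s) is the binomial coefficient. -/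
open MeasureTheory ProbabilityTheory Finset
open scoped ProbabilityTheory

/-- Lemma 3 (Identification with misspecified exchangeability): without exchangeability,
conditioning on the number of treated neighbors recovers a probability-weighted average of
assignment-specific means; under i.i.d. Bernoulli(p) assignment it is a simple average. -/
theorem stmt_2 {Ω : Type*} [MeasureSpace Ω] [IsProbabilityMeasure (ℙ : Measure Ω)]
    (n : ℕ) (Y : Bool → (Fin n → Bool) → Ω → ℝ)
    (D : Ω → Bool) (Dvec : Ω → Fin n → Bool)
    (hYmeas : ∀ d v, Measurable (Y d v)) (hDmeas : Measurable D)
    (hDvecmeas : Measurable Dvec)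
    (hint : ∀ d v, Integrable (Y d v))
    (hindep : ∀ d v, IndepFun (Y d v) (fun ω => (D ω, Dvec ω)) ℙ)
    (Yobs : Ω → ℝ) (hobs : ∀ ω, Yobs ω = Y (D ω) (Dvec ω) ω)
    (d : Bool) (s : ℕ)
    (hpos : 0 < ℙ {ω | D ω = d ∧
      (Finset.univ.filter (fun j => Dvec ω j = true)).card = s}) :
    ((∫ ω in {ω | D ω = d ∧
        (Finset.univ.filter (fun j => Dvec ω j = true)).card = s}, Yobs ω) /
      (ℙ {ω | D ω = d ∧
        (Finset.univ.filter (fun j => Dvec ω j = true)).card = s}).toReal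
      = ∑ v ∈ Finset.univ.filter
          (fun v : Fin n → Bool => (Finset.univ.filter (fun j => v j = true)).card = s),
          (∫ ω, Y d v ω) *
            (((ℙ {ω | D ω = d ∧ Dvec ω = v}).toReal / (ℙ {ω | Dvec ω = v}).toReal) *
              (ℙ {ω | Dvec ω = v}).toReal) /
            (((ℙ {ω | D ω = d ∧
                (Finset.univ.filter (fun j => Dvec ω j = true)).card = s}).toReal /
              (ℙ {ω | (Finset.univ.filter (fun j => Dvec ω j = true)).card = s}).toReal) *
              (ℙ {ω | (Finset.univ.filter (fun j => Dvec ω j = true)).card = s}).toReal))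
    ∧
    (∀ p : ℝ, 0 < p → p < 1 →
      (∀ (d' : Bool) (v : Fin n → Bool),
        (ℙ {ω | D ω = d' ∧ Dvec ω = v}).toReal =
          p ^ ((if d' then 1 else 0) + (Finset.univ.filter (fun j => v j = true)).card) *
          (1 - p) ^ (n + 1 - (if d' then 1 else 0) -
            (Finset.univ.filter (fun j => v j = true)).card)) →
      (∫ ω in {ω | D ω = d ∧
          (Finset.univ.filter (fun j => Dvec ω j = true)).card = s}, Yobs ω) /
        (ℙ {ω | D ω = d ∧
          (Finset.univ.filter (fun j => Dvec ω j = true)).card = s}).toReal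
        = ((n.choose s : ℝ))⁻¹ *
          ∑ v ∈ Finset.univ.filter
            (fun v : Fin n → Bool => (Finset.univ.filter (fun j => v j = true)).card = s),
            ∫ ω, Y d v ω) := by
  classical
  set A : Set Ω := {ω | D ω = d ∧
      (Finset.univ.filter (fun j => Dvec ω j = true)).card = s} with hAdef
  set F : Finset (Fin n → Bool) := Finset.univ.filter
      (fun v : Fin n → Bool => (Finset.univ.filter (fun j => v j = true)).card = s) with hFdef
  have hBmeas : ∀ v : Fin n → Bool, MeasurableSet {ω | D ω = d ∧ Dvec ω = v} := fun v =>
    (hDmeas (measurableSet_singleton d)).inter (hDvecmeas (measurableSet_singleton v))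
  have hAeq : A = ⋃ v ∈ F, {ω | D ω = d ∧ Dvec ω = v} := by
    ext ω
    simp only [hAdef, hFdef, Set.mem_setOf_eq, Set.mem_iUnion, Finset.mem_filter,
      Finset.mem_univ, true_and]
    constructor
    · rintro ⟨h1, h2⟩; exact ⟨Dvec ω, h2, h1, rfl⟩
    · rintro ⟨v, hv, h1, h2⟩; subst h2; exact ⟨h1, hv⟩
  have hdisj : (↑F : Set (Fin n → Bool)).Pairwise
      (Function.onFun Disjoint (fun v => {ω | D ω = d ∧ Dvec ω = v})) := by
    intro v _ w _ hvw
    exact Set.disjoint_left.2 fun ω h1 h2 => hvw (h1.2.symm.trans h2.2)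
  have hcore : ∀ v : Fin n → Bool, ∫ ω in {ω | D ω = d ∧ Dvec ω = v}, Yobs ω
      = (∫ ω, Y d v ω) * (ℙ {ω | D ω = d ∧ Dvec ω = v}).toReal := by
    intro v
    have hcong : ∫ ω in {ω | D ω = d ∧ Dvec ω = v}, Yobs ω
        = ∫ ω in {ω | D ω = d ∧ Dvec ω = v}, Y d v ω :=
      setIntegral_congr_fun (hBmeas v) (fun ω hω => by
        rw [hobs, hω.1, hω.2])
    set g : Bool × (Fin n → Bool) → ℝ := Set.indicator {(d, v)} 1 with hg
    have hgmeas : Measurable g := measurable_of_countable _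
    have hind : (fun ω => g (D ω, Dvec ω))
        = Set.indicator {ω | D ω = d ∧ Dvec ω = v} (fun _ => (1:ℝ)) := by
      funext ω
      by_cases hω : D ω = d ∧ Dvec ω = v
      · have : (D ω, Dvec ω) = (d, v) := by rw [hω.1, hω.2]
        simp [hg, this, Set.indicator_of_mem, hω]
      · have h2 : (D ω, Dvec ω) ≠ (d, v) := by
          intro h; exact hω ⟨congrArg Prod.fst h, congrArg Prod.snd h⟩
        simp [hg, Set.indicator_of_notMem, h2, hω]
    have hprod : ∫ ω, Y d v ω * g (D ω, Dvec ω) = (∫ ω, Y d v ω) * ∫ ω, g (D ω, Dvec ω) :=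
      IndepFun.integral_fun_mul_eq_mul_integral ((hindep d v).comp measurable_id hgmeas) (hint d v).1
        ((hgmeas.comp (hDmeas.prodMk hDvecmeas)).aestronglyMeasurable)
    have h1 : ∫ ω in {ω | D ω = d ∧ Dvec ω = v}, Y d v ω
        = ∫ ω, Y d v ω * g (D ω, Dvec ω) := by
      rw [← integral_indicator (hBmeas v)]
      congr 1
      funext ω
      by_cases hω : ω ∈ {ω | D ω = d ∧ Dvec ω = v}
      · have : (D ω, Dvec ω) = (d, v) := by rw [hω.1, hω.2]
        simp [hg, this, Set.indicator_of_mem, hω]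
      · have h2 : (D ω, Dvec ω) ≠ (d, v) := by
          intro h; exact hω ⟨congrArg Prod.fst h, congrArg Prod.snd h⟩
        simp [hg, Set.indicator_of_notMem, h2, hω]
    have h2 : ∫ ω, g (D ω, Dvec ω) = (ℙ {ω | D ω = d ∧ Dvec ω = v}).toReal := by
      rw [hind, integral_indicator_const (1:ℝ) (hBmeas v), smul_eq_mul, mul_one, measureReal_def]
    rw [hcong, h1, hprod, h2]
  have hintOn : ∀ v : Fin n → Bool, IntegrableOn Yobs {ω | D ω = d ∧ Dvec ω = v} :=
    fun v => ((hint d v).integrableOn).congr_fun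
      (fun ω hω => by rw [hobs, hω.1, hω.2]) (hBmeas v)
  have hsplit : ∫ ω in A, Yobs ω
      = ∑ v ∈ F, (∫ ω, Y d v ω) * (ℙ {ω | D ω = d ∧ Dvec ω = v}).toReal := by
    rw [hAeq, integral_biUnion_finset F (fun v _ => hBmeas v) hdisj (fun v _ => hintOn v)]
    exact Finset.sum_congr rfl fun v _ => hcore v
  have hPsplit : (ℙ A).toReal = ∑ v ∈ F, (ℙ {ω | D ω = d ∧ Dvec ω = v}).toReal := by
    rw [hAeq, measure_biUnion_finset hdisj (fun v _ => hBmeas v),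
      ENNReal.toReal_sum (fun v _ => measure_ne_top _ _)]
  have hPA_pos : 0 < (ℙ A).toReal := ENNReal.toReal_pos hpos.ne' (measure_ne_top _ _)
  have hPS_pos : 0 < (ℙ {ω | (Finset.univ.filter (fun j => Dvec ω j = true)).card = s}).toReal := by
    refine lt_of_lt_of_le hPA_pos (ENNReal.toReal_mono (measure_ne_top _ _)
      (measure_mono ?_))
    intro ω hω; exact hω.2
  constructor
  · rw [hsplit, Finset.sum_div]
    refine Finset.sum_congr rfl fun v hv => ?_
    have h1 : ((ℙ {ω | D ω = d ∧ Dvec ω = v}).toReal / (ℙ {ω | Dvec ω = v}).toReal)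
        * (ℙ {ω | Dvec ω = v}).toReal = (ℙ {ω | D ω = d ∧ Dvec ω = v}).toReal := by
      by_cases h : (ℙ {ω | Dvec ω = v}).toReal = 0
      · have h0 : ℙ {ω | Dvec ω = v} = 0 := by
          rcases (ENNReal.toReal_eq_zero_iff _).1 h with h' | h'
          · exact h'
          · exact absurd h' (measure_ne_top _ _)
        have h3 : ℙ {ω | D ω = d ∧ Dvec ω = v} = 0 :=
          measure_mono_null (fun ω hω => hω.2) h0
        simp [h, h3]
      · rw [div_mul_cancel₀ _ h]
    have h2 : ((ℙ A).toReal
          / (ℙ {ω | (Finset.univ.filter (fun j => Dvec ω j = true)).card = s}).toReal)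
        * (ℙ {ω | (Finset.univ.filter (fun j => Dvec ω j = true)).card = s}).toReal
        = (ℙ A).toReal := div_mul_cancel₀ _ hPS_pos.ne'
    rw [h1, h2]
  · intro p hp0 hp1 hber
    have hconst : ∀ v ∈ F, (ℙ {ω | D ω = d ∧ Dvec ω = v}).toReal
        = p ^ ((if d then 1 else 0) + s) * (1 - p) ^ (n + 1 - (if d then 1 else 0) - s) := by
      intro v hv
      have hcv : (Finset.univ.filter (fun j => v j = true)).card = s := by
        rw [hFdef] at hv
        exact (Finset.mem_filter.1 hv).2
      rw [hber d v, hcv]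
    have hcpos : 0 < p ^ ((if d then 1 else 0) + s)
        * (1 - p) ^ (n + 1 - (if d then 1 else 0) - s) :=
      mul_pos (pow_pos hp0 _) (pow_pos (by linarith) _)
    have hcard : F.card = n.choose s := by
      have h := Finset.card_powersetCard s (Finset.univ : Finset (Fin n))
      rw [Finset.card_univ, Fintype.card_fin] at h
      rw [hFdef, ← h]
      apply Finset.card_bij (fun v _ => Finset.univ.filter (fun j => v j = true))
      · intro v hv
        rw [Finset.mem_powersetCard]
        exact ⟨Finset.subset_univ _, (Finset.mem_filter.1 hv).2⟩
      · intro v hv w hw h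
        funext j
        have := Finset.ext_iff.1 h j
        simp only [Finset.mem_filter, Finset.mem_univ, true_and] at this
        cases hvj : v j <;> cases hwj : w j <;> simp_all
      · intro t ht
        refine ⟨fun j => if j ∈ t then true else false, ?_, ?_⟩
        · simp only [Finset.mem_filter, Finset.mem_univ, true_and]
          rw [Finset.mem_powersetCard] at ht
          rw [← ht.2]
          congr 1
          ext j
          simp
        · ext j; simp
    have hPA2 : (ℙ A).toReal = (n.choose s : ℝ) * (p ^ ((if d then 1 else 0) + s)
        * (1 - p) ^ (n + 1 - (if d then 1 else 0) - s)) := by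
      rw [hPsplit, Finset.sum_congr rfl hconst, Finset.sum_const, hcard, nsmul_eq_mul]
    have hsum : ∑ v ∈ F, (∫ ω, Y d v ω) * (ℙ {ω | D ω = d ∧ Dvec ω = v}).toReal
        = (∑ v ∈ F, ∫ ω, Y d v ω) * (p ^ ((if d then 1 else 0) + s)
          * (1 - p) ^ (n + 1 - (if d then 1 else 0) - s)) := by
      rw [Finset.sum_mul]
      exact Finset.sum_congr rfl fun v hv => by rw [hconst v hv]
    have hchoose_ne : (n.choose s : ℝ) ≠ 0 := by
      intro h0
      have := hPA_pos.ne'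
      rw [hPA2, h0, zero_mul] at this
      exact this rfl
    rw [hsplit, hsum, hPA2, mul_div_mul_right _ _ hcpos.ne', div_eq_inv_mul]
end

section
/- Let (Y(d,𝐝)) be potential outcomes satisfying exchangeability (E[Y(d,𝐝)] = μ(d, Σ_j d_j)) and independent of (𝐃, T), where T ∈ {0,1} is a group-level indicator and 𝐃 ∈ {0,1}^{n+1} the within-group assignment vector with D the own assignment and S the number of treated neighbors. Suppose T = 0 implies 𝐃 = 0 almost surely and P[D=0, T=1] > 0. Define θ_s(0) = μ(0,s) − μ(0,0). Then Δ_PP := E[Y | D=0, T=1] − E[Y | T=0] = Σ_{s=1}^{n} θ_s(0) · P[S=s | D=0, T=1]. -/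
open MeasureTheory ProbabilityTheory Finset
open scoped ProbabilityTheory

private lemma aux_indep {Ω γ : Type*} [MeasureSpace Ω] [IsProbabilityMeasure (ℙ : Measure Ω)]
    [MeasurableSpace γ] [Countable γ] [MeasurableSingletonClass γ]
    {f : Ω → ℝ} {X : Ω → γ} (B : Set γ)
    (hf : Integrable f ℙ) (hX : Measurable X) (hind : IndepFun f X ℙ) :
    ∫ ω in X ⁻¹' B, f ω = (∫ ω, f ω) * (ℙ (X ⁻¹' B)).toReal := by
  have hB : MeasurableSet B := (Set.to_countable B).measurableSet
  have hmB : Measurable (B.indicator (fun _ : γ => (1:ℝ))) := measurable_const.indicator hB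
  have hg : IndepFun f (fun ω => B.indicator (fun _ : γ => (1:ℝ)) (X ω)) ℙ :=
    hind.comp measurable_id hmB
  have h2 := hg.integral_mul_eq_mul_integral hf.1 ((hmB.comp hX).aestronglyMeasurable)
  have h2' : (∫ ω, f ω * B.indicator (fun _ : γ => (1:ℝ)) (X ω))
      = (∫ ω, f ω) * ∫ ω, B.indicator (fun _ : γ => (1:ℝ)) (X ω) := by
    simpa [Pi.mul_apply] using h2
  have h3 : (fun ω => B.indicator (fun _ : γ => (1:ℝ)) (X ω))
      = (X ⁻¹' B).indicator (fun _ => (1:ℝ)) := by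
    ext ω; by_cases h : X ω ∈ B <;> simp [Set.indicator_apply, h]
  calc ∫ ω in X ⁻¹' B, f ω = ∫ ω, (X ⁻¹' B).indicator f ω := (integral_indicator (hX hB)).symm
    _ = ∫ ω, f ω * B.indicator (fun _ : γ => (1:ℝ)) (X ω) := by
        congr 1; ext ω; by_cases h : X ω ∈ B <;> simp [Set.indicator_apply, h]
    _ = (∫ ω, f ω) * ∫ ω, B.indicator (fun _ : γ => (1:ℝ)) (X ω) := h2'
    _ = (∫ ω, f ω) * (ℙ (X ⁻¹' B)).toReal := by
        rw [h3, integral_indicator_const (1:ℝ) (hX hB)]; simp [measureReal_def]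

/-- Lemma 4 (Identification in partial population experiments): the partial-population
contrast identifies a weighted average of spillover effects on the controls. -/
theorem stmt_3 {Ω : Type*} [MeasureSpace Ω] [IsProbabilityMeasure (ℙ : Measure Ω)]
    (n : ℕ) (Y : Bool → (Fin n → Bool) → Ω → ℝ)
    (D : Ω → Bool) (Dvec : Ω → Fin n → Bool) (T : Ω → Bool)
    (hYmeas : ∀ d v, Measurable (Y d v)) (hDmeas : Measurable D)
    (hDvecmeas : Measurable Dvec) (hTmeas : Measurable T)
    (hint : ∀ d v, Integrable (Y d v))
    (hindep : ∀ d v, IndepFun (Y d v) (fun ω => (D ω, Dvec ω, T ω)) ℙ)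
    (μf : Bool → ℕ → ℝ)
    (hexch : ∀ d v, (∫ ω, Y d v ω) =
      μf d ((Finset.univ.filter (fun j => v j = true)).card))
    (Yobs : Ω → ℝ) (hobs : ∀ ω, Yobs ω = Y (D ω) (Dvec ω) ω)
    (hpure : ∀ᵐ ω ∂ℙ, T ω = false → (D ω = false ∧ Dvec ω = fun _ => false))
    (hposT0 : 0 < ℙ {ω | T ω = false})
    (hpos : 0 < ℙ {ω | D ω = false ∧ T ω = true}) :
    (∫ ω in {ω | D ω = false ∧ T ω = true}, Yobs ω) /
        (ℙ {ω | D ω = false ∧ T ω = true}).toReal -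
      (∫ ω in {ω | T ω = false}, Yobs ω) / (ℙ {ω | T ω = false}).toReal
    = ∑ s ∈ Finset.Icc 1 n, (μf false s - μf false 0) *
        ((ℙ {ω | (Finset.univ.filter (fun j => Dvec ω j = true)).card = s ∧
            D ω = false ∧ T ω = true}).toReal /
          (ℙ {ω | D ω = false ∧ T ω = true}).toReal) := by
  classical
  set X : Ω → Bool × (Fin n → Bool) × Bool := fun ω => (D ω, Dvec ω, T ω) with hXdef
  have hXm : Measurable X := hDmeas.prodMk (hDvecmeas.prodMk hTmeas)
  set A : Set Ω := {ω | D ω = false ∧ T ω = true} with hAdef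
  -- every subset of Ω that is a preimage under X is measurable
  have hpre : ∀ B : Set (Bool × (Fin n → Bool) × Bool), MeasurableSet (X ⁻¹' B) :=
    fun B => hXm ((Set.to_countable B).measurableSet)
  have hAmeas : MeasurableSet A :=
    hpre {p | p.1 = false ∧ p.2.2 = true}
  -- the cells of the partition of A according to Dvec
  set Av : (Fin n → Bool) → Set Ω :=
    fun v => {ω | Dvec ω = v ∧ D ω = false ∧ T ω = true} with hAvdef
  have hAv_pre : ∀ v, Av v = X ⁻¹' {p | p.2.1 = v ∧ p.1 = false ∧ p.2.2 = true} :=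
    fun v => rfl
  have hAv_meas : ∀ v, MeasurableSet (Av v) := fun v => (hAv_pre v) ▸ hpre _
  set g : (Fin n → Bool) → ℕ :=
    fun v => (Finset.univ.filter (fun j => v j = true)).card with hgdef
  set q : (Fin n → Bool) → ℝ := fun v => (ℙ (Av v)).toReal with hqdef
  set p : ℕ → ℝ := fun s =>
    (ℙ {ω | (Finset.univ.filter (fun j => Dvec ω j = true)).card = s ∧
        D ω = false ∧ T ω = true}).toReal with hpdef
  set P : ℝ := (ℙ A).toReal with hPdef
  have hPpos : 0 < P := ENNReal.toReal_pos hpos.ne' (measure_ne_top _ _)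
  have hPne : P ≠ 0 := hPpos.ne'
  -- the control group term equals μf false 0
  have hQne : (ℙ {ω | T ω = false}).toReal ≠ 0 :=
    (ENNReal.toReal_pos hposT0.ne' (measure_ne_top _ _)).ne'
  have hCmeas : MeasurableSet {ω | T ω = false} := hpre {p | p.2.2 = false}
  have hC : ∫ ω in {ω | T ω = false}, Yobs ω
      = μf false 0 * (ℙ {ω | T ω = false}).toReal := by
    have h1 : ∫ ω in {ω | T ω = false}, Yobs ω
        = ∫ ω in {ω | T ω = false}, Y false (fun _ => false) ω := by
      refine setIntegral_congr_ae hCmeas ?_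
      filter_upwards [hpure] with ω hω hmem
      obtain ⟨hd, hv⟩ := hω hmem
      rw [hobs, hd, hv]
    have h2 : {ω | T ω = false} = X ⁻¹' {p | p.2.2 = false} := rfl
    rw [h1, h2, aux_indep _ (hint _ _) hXm (hindep _ _), hexch]
    congr 2
    simp
  -- the partition of A
  have hApart : A = ⋃ v ∈ (Finset.univ : Finset (Fin n → Bool)), Av v := by
    ext ω
    simp only [Set.mem_iUnion, Finset.mem_univ, exists_prop, true_and, hAvdef,
      Set.mem_setOf_eq, hAdef]
    constructor
    · intro h; exact ⟨Dvec ω, rfl, h⟩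
    · rintro ⟨v, -, h⟩; exact h
  have hdisj : (↑(Finset.univ : Finset (Fin n → Bool)) : Set (Fin n → Bool)).Pairwise
      (Function.onFun Disjoint Av) := by
    intro u _ v _ huv
    simp only [Function.onFun, Set.disjoint_left, hAvdef, Set.mem_setOf_eq]
    rintro ω ⟨h1, -⟩ ⟨h2, -⟩
    exact huv (h1.symm.trans h2)
  -- the integral over A splits
  have hsplit : ∫ ω in A, Yobs ω = ∑ v : Fin n → Bool, μf false (g v) * q v := by
    rw [hApart, integral_biUnion_finset _ (fun v _ => hAv_meas v) hdisj
      (fun v _ => ((hint false v).integrableOn).congr_fun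
        (fun ω hω => by rw [hobs, hω.2.1, hω.1]) (hAv_meas v))]
    refine Finset.sum_congr rfl fun v _ => ?_
    have h1 : ∫ ω in Av v, Yobs ω = ∫ ω in Av v, Y false v ω :=
      setIntegral_congr_fun (hAv_meas v) fun ω hω => by rw [hobs, hω.1, hω.2.1]
    rw [h1, hAv_pre v, aux_indep _ (hint _ _) hXm (hindep _ _), hexch]
    rw [hqdef, hgdef, ← hAv_pre v]
  -- grouping cells by number of treated neighbors
  have hmaps : ∀ v ∈ (Finset.univ : Finset (Fin n → Bool)), g v ∈ Finset.range (n + 1) := by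
    intro v _
    exact Finset.mem_range.2 (Nat.lt_succ_of_le
      (le_trans (Finset.card_filter_le _ _) (by simp)))
  have hPs : ∀ s : ℕ, p s = ∑ v ∈ Finset.univ.filter (fun v => g v = s), q v := by
    intro s
    have hunion : {ω | (Finset.univ.filter (fun j => Dvec ω j = true)).card = s ∧
        D ω = false ∧ T ω = true}
        = ⋃ v ∈ Finset.univ.filter (fun v => g v = s), Av v := by
      ext ω
      simp only [Set.mem_iUnion, Finset.mem_filter, Finset.mem_univ, true_and, exists_prop,
        hAvdef, Set.mem_setOf_eq, hgdef]
      constructor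
      · rintro ⟨hs, h⟩; exact ⟨Dvec ω, hs, rfl, h⟩
      · rintro ⟨v, hs, hv, h⟩; exact ⟨by rw [hv, hs], h⟩
    rw [hpdef]
    simp only [hunion]
    rw [measure_biUnion_finset (hdisj.mono (by simp [Set.subset_def])) (fun v _ => hAv_meas v),
      ENNReal.toReal_sum (fun v _ => measure_ne_top _ _)]
  have hqsum : ∑ v : Fin n → Bool, q v = P := by
    rw [hPdef, hApart, measure_biUnion_finset hdisj (fun v _ => hAv_meas v),
      ENNReal.toReal_sum (fun v _ => measure_ne_top _ _)]
  have hpsum : ∑ s ∈ Finset.range (n + 1), p s = P := by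
    calc ∑ s ∈ Finset.range (n + 1), p s
        = ∑ s ∈ Finset.range (n + 1), ∑ v ∈ Finset.univ.filter (fun v => g v = s), q v :=
          Finset.sum_congr rfl fun s _ => hPs s
      _ = ∑ v : Fin n → Bool, q v := Finset.sum_fiberwise_of_maps_to hmaps q
      _ = P := hqsum
  have hmain : ∫ ω in A, Yobs ω = ∑ s ∈ Finset.range (n + 1), μf false s * p s := by
    rw [hsplit]
    calc ∑ v : Fin n → Bool, μf false (g v) * q v
        = ∑ s ∈ Finset.range (n + 1), ∑ v ∈ Finset.univ.filter (fun v => g v = s),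
            μf false (g v) * q v :=
          (Finset.sum_fiberwise_of_maps_to hmaps _).symm
      _ = ∑ s ∈ Finset.range (n + 1), μf false s * p s := by
          refine Finset.sum_congr rfl fun s _ => ?_
          rw [hPs s, Finset.mul_sum]
          refine Finset.sum_congr rfl fun v hv => ?_
          rw [(Finset.mem_filter.1 hv).2]
  -- final algebra
  have hIcc : Finset.range (n + 1) = insert 0 (Finset.Icc 1 n) := by
    ext s
    simp only [Finset.mem_range, Finset.mem_insert, Finset.mem_Icc]
    omega
  have h0notin : (0 : ℕ) ∉ Finset.Icc 1 n := by simp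
  rw [hmain, hC, mul_div_assoc, div_self hQne, mul_one]
  have expand : ∑ s ∈ Finset.Icc 1 n, (μf false s - μf false 0) * (p s / P)
      = (∑ s ∈ Finset.range (n + 1), μf false s * p s) / P - μf false 0 := by
    have step1 : ∑ s ∈ Finset.Icc 1 n, (μf false s - μf false 0) * (p s / P)
        = ∑ s ∈ Finset.range (n + 1), (μf false s - μf false 0) * (p s / P) := by
      rw [hIcc, Finset.sum_insert h0notin, sub_self, zero_mul, zero_add]
    rw [step1]
    calc ∑ s ∈ Finset.range (n + 1), (μf false s - μf false 0) * (p s / P)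
        = (∑ s ∈ Finset.range (n + 1), (μf false s * p s - μf false 0 * p s)) / P := by
          rw [Finset.sum_div]
          exact Finset.sum_congr rfl fun s _ => by ring
      _ = ((∑ s ∈ Finset.range (n + 1), μf false s * p s)
            - μf false 0 * ∑ s ∈ Finset.range (n + 1), p s) / P := by
          rw [Finset.sum_sub_distrib, Finset.mul_sum]
      _ = (∑ s ∈ Finset.range (n + 1), μf false s * p s) / P - μf false 0 := by
          rw [hpsum, sub_div, mul_div_assoc, div_self hPne, mul_one]
  rw [← expand]
end

section
/- Under exchangeability and independence of potential outcomes from assignments, with P[D=d,S=s]>0 for all (d,s), the population difference in means β_D := E[Y | D=1] − E[Y | D=0] satisfies β_D = τ_0 + Σ_{s=1}^{n} θ_s(1) P[S=s | D=1] − Σ_{s=1}^{n} θ_s(0) P[S=s | D=0], where τ_0 = μ(1,0) − μ(0,0) and θ_s(d) = μ(d,s) − μ(d,0). -/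
open MeasureTheory ProbabilityTheory Finset
open scoped ProbabilityTheory

lemma key_aux {Ω : Type*} [MeasureSpace Ω] [IsProbabilityMeasure (ℙ : Measure Ω)]
    (n : ℕ) (Y : Ω → ℝ) (D : Ω → Bool) (S : Ω → ℕ)
    (hYmeas : Measurable Y) (hDmeas : Measurable D) (hSmeas : Measurable S)
    (hint : Integrable Y) (hSle : ∀ ω, S ω ≤ n) (d : Bool)
    (hpos : ∀ s : ℕ, s ≤ n → 0 < ℙ {ω | D ω = d ∧ S ω = s})
    (μf : ℕ → ℝ)
    (hid : ∀ s : ℕ, s ≤ n →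
      (∫ ω in {ω | D ω = d ∧ S ω = s}, Y ω) /
        (ℙ {ω | D ω = d ∧ S ω = s}).toReal = μf s) :
    (∫ ω in {ω | D ω = d}, Y ω) / (ℙ {ω | D ω = d}).toReal
    = μf 0 + ∑ s ∈ Finset.Icc 1 n, (μf s - μf 0) *
        ((ℙ {ω | S ω = s ∧ D ω = d}).toReal / (ℙ {ω | D ω = d}).toReal) := by
  set A : ℕ → Set Ω := fun s => {ω | D ω = d ∧ S ω = s} with hA
  have hAmeas : ∀ s, MeasurableSet (A s) := fun s =>
    (hDmeas (MeasurableSet.singleton d)).inter (hSmeas (MeasurableSet.singleton s))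
  have hUnion : {ω | D ω = d} = ⋃ s ∈ Finset.Icc 0 n, A s := by
    ext ω
    simp only [Set.mem_setOf_eq, Set.mem_iUnion, Finset.mem_Icc, hA]
    constructor
    · intro h; exact ⟨S ω, ⟨Nat.zero_le _, hSle ω⟩, h, rfl⟩
    · rintro ⟨s, _, h, _⟩; exact h
  have hdisj : Set.Pairwise ↑(Finset.Icc 0 n) (Function.onFun Disjoint A) := by
    intro i _ j _ hij
    apply Set.disjoint_left.mpr
    rintro ω ⟨_, hi⟩ ⟨_, hj⟩
    exact hij (hi ▸ hj ▸ rfl)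
  set p : ℕ → ℝ := fun s => (ℙ (A s)).toReal with hp
  have hppos : ∀ s ≤ n, 0 < p s := fun s hs =>
    ENNReal.toReal_pos (hpos s hs).ne' (measure_ne_top _ _)
  have hP : (ℙ {ω | D ω = d}).toReal = ∑ s ∈ Finset.Icc 0 n, p s := by
    rw [hUnion, measure_biUnion_finset hdisj (fun s _ => hAmeas s), ENNReal.toReal_sum]
    intro s _; exact measure_ne_top _ _
  have hI : (∫ ω in {ω | D ω = d}, Y ω) = ∑ s ∈ Finset.Icc 0 n, μf s * p s := by
    rw [hUnion, integral_biUnion_finset _ (fun s _ => hAmeas s) hdisj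
      (fun s _ => hint.integrableOn)]
    refine Finset.sum_congr rfl fun s hs => ?_
    rw [Finset.mem_Icc] at hs
    have := hid s hs.2
    rw [div_eq_iff (hppos s hs.2).ne'] at this
    exact this
  have hq : ∀ s, (ℙ {ω | S ω = s ∧ D ω = d}).toReal = p s := by
    intro s; congr 1; congr 1; ext ω; exact and_comm
  have hIcc : Finset.Icc 0 n = insert 0 (Finset.Icc 1 n) := by
    ext x; simp [Finset.mem_Icc]; omega
  have h0 : (0:ℕ) ∉ Finset.Icc 1 n := by simp
  have hPpos : 0 < ∑ s ∈ Finset.Icc 0 n, p s := by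
    rw [hIcc, Finset.sum_insert h0]
    have : 0 ≤ ∑ s ∈ Finset.Icc 1 n, p s :=
      Finset.sum_nonneg fun s hs => (hppos s (Finset.mem_Icc.mp hs).2).le
    linarith [hppos 0 (Nat.zero_le n)]
  rw [hI, hP]
  simp only [hq]
  rw [hIcc, Finset.sum_insert h0, Finset.sum_insert h0]
  set Q := ∑ s ∈ Finset.Icc 1 n, p s
  have hPne : p 0 + Q ≠ 0 := by rw [hIcc, Finset.sum_insert h0] at hPpos; linarith
  have hsum : ∑ s ∈ Finset.Icc 1 n, (μf s - μf 0) * (p s / (p 0 + Q))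
      = ((∑ s ∈ Finset.Icc 1 n, μf s * p s) - μf 0 * Q) / (p 0 + Q) := by
    simp only [← mul_div_assoc, ← Finset.sum_div]
    congr 1
    rw [Finset.mul_sum, ← Finset.sum_sub_distrib]
    exact Finset.sum_congr rfl fun s _ => by ring
  rw [hsum]
  field_simp
  ring

/-- Lemma 5 (Difference in means): the population difference in means equals the direct
effect `τ₀` plus a difference of weighted averages of spillover effects. -/
theorem stmt_4 {Ω : Type*} [MeasureSpace Ω] [IsProbabilityMeasure (ℙ : Measure Ω)]
    (n : ℕ) (Y : Ω → ℝ) (D : Ω → Bool) (S : Ω → ℕ)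
    (hYmeas : Measurable Y) (hDmeas : Measurable D) (hSmeas : Measurable S)
    (hint : Integrable Y)
    (hSle : ∀ ω, S ω ≤ n)
    (hpos : ∀ (d : Bool) (s : ℕ), s ≤ n → 0 < ℙ {ω | D ω = d ∧ S ω = s})
    (μf : Bool → ℕ → ℝ)
    (hid : ∀ (d : Bool) (s : ℕ), s ≤ n →
      (∫ ω in {ω | D ω = d ∧ S ω = s}, Y ω) /
        (ℙ {ω | D ω = d ∧ S ω = s}).toReal = μf d s) :
    (∫ ω in {ω | D ω = true}, Y ω) / (ℙ {ω | D ω = true}).toReal -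
      (∫ ω in {ω | D ω = false}, Y ω) / (ℙ {ω | D ω = false}).toReal
    = (μf true 0 - μf false 0)
      + ∑ s ∈ Finset.Icc 1 n, (μf true s - μf true 0) *
          ((ℙ {ω | S ω = s ∧ D ω = true}).toReal / (ℙ {ω | D ω = true}).toReal)
      - ∑ s ∈ Finset.Icc 1 n, (μf false s - μf false 0) *
          ((ℙ {ω | S ω = s ∧ D ω = false}).toReal / (ℙ {ω | D ω = false}).toReal) := by
  rw [key_aux n Y D S hYmeas hDmeas hSmeas hint hSle true (hpos true) (μf true) (hid true),
    key_aux n Y D S hYmeas hDmeas hSmeas hint hSle false (hpos false) (μf false) (hid false)]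
  ring
end

section
/- In the setting of the previous statement, if additionally D is independent of S (e.g., under simple random assignment with i.i.d. treatments), then β_D = τ_0 + Σ_{s=1}^{n} (θ_s(1) − θ_s(0)) P[S=s]. -/
open MeasureTheory ProbabilityTheory Finset
open scoped ProbabilityTheory

/-- Difference in means under simple random assignment (D independent of S):
`β_D = τ₀ + Σ_s (θ_s(1) − θ_s(0)) P[S=s]`. -/
theorem stmt_5 {Ω : Type*} [MeasureSpace Ω] [IsProbabilityMeasure (ℙ : Measure Ω)]
    (n : ℕ) (Y : Ω → ℝ) (D : Ω → Bool) (S : Ω → ℕ)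
    (hYmeas : Measurable Y) (hDmeas : Measurable D) (hSmeas : Measurable S)
    (hint : Integrable Y)
    (hSle : ∀ ω, S ω ≤ n)
    (hpos : ∀ (d : Bool) (s : ℕ), s ≤ n → 0 < ℙ {ω | D ω = d ∧ S ω = s})
    (μf : Bool → ℕ → ℝ)
    (hid : ∀ (d : Bool) (s : ℕ), s ≤ n →
      (∫ ω in {ω | D ω = d ∧ S ω = s}, Y ω) /
        (ℙ {ω | D ω = d ∧ S ω = s}).toReal = μf d s)
    (hindep : IndepFun D S ℙ) :
    (∫ ω in {ω | D ω = true}, Y ω) / (ℙ {ω | D ω = true}).toReal -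
      (∫ ω in {ω | D ω = false}, Y ω) / (ℙ {ω | D ω = false}).toReal
    = (μf true 0 - μf false 0)
      + ∑ s ∈ Finset.Icc 1 n,
          ((μf true s - μf true 0) - (μf false s - μf false 0)) *
            (ℙ {ω | S ω = s}).toReal := by
  have hBmeas : ∀ s : ℕ, MeasurableSet {ω | S ω = s} := fun s =>
    hSmeas (measurableSet_singleton s)
  have hAmeas : ∀ d : Bool, MeasurableSet {ω | D ω = d} := fun d =>
    hDmeas (measurableSet_singleton d)
  have hABmeas : ∀ (d : Bool) (s : ℕ), MeasurableSet {ω | D ω = d ∧ S ω = s} := by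
    intro d s
    have : {ω | D ω = d ∧ S ω = s} = {ω | D ω = d} ∩ {ω | S ω = s} := rfl
    rw [this]; exact (hAmeas d).inter (hBmeas s)
  have hindep' : ∀ (d : Bool) (s : ℕ),
      ℙ {ω | D ω = d ∧ S ω = s} = ℙ {ω | D ω = d} * ℙ {ω | S ω = s} := by
    intro d s
    have := hindep.measure_inter_preimage_eq_mul {d} {s}
      (measurableSet_singleton d) (measurableSet_singleton s)
    simpa [Set.preimage, Set.inter_def] using this
  have hApos : ∀ d : Bool, 0 < ℙ {ω | D ω = d} := by
    intro d
    have h := hpos d 0 (Nat.zero_le n)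
    rw [hindep'] at h
    refine pos_iff_ne_zero.mpr (fun h0 => ?_)
    rw [h0, zero_mul] at h
    exact lt_irrefl _ h
  have hAne : ∀ d : Bool, (ℙ {ω | D ω = d}).toReal ≠ 0 := by
    intro d
    have := hApos d
    exact ENNReal.toReal_ne_zero.mpr ⟨this.ne', measure_ne_top _ _⟩
  -- union decomposition
  have hUnion : ∀ d : Bool,
      {ω | D ω = d} = ⋃ s ∈ Finset.range (n + 1), {ω | D ω = d ∧ S ω = s} := by
    intro d
    ext ω
    simp only [Set.mem_setOf_eq, Set.mem_iUnion, Finset.mem_range]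
    constructor
    · intro h; exact ⟨S ω, Nat.lt_succ_of_le (hSle ω), h, rfl⟩
    · rintro ⟨s, _, h, _⟩; exact h
  have hdisj : ∀ d : Bool, (↑(Finset.range (n + 1)) : Set ℕ).Pairwise
      (Function.onFun Disjoint (fun s => {ω | D ω = d ∧ S ω = s})) := by
    intro d s _ t _ hst
    simp only [Function.onFun, Set.disjoint_left, Set.mem_setOf_eq]
    rintro ω ⟨_, h1⟩ ⟨_, h2⟩
    exact hst (h1 ▸ h2 ▸ rfl)
  -- integral and measure decomposition
  have hIdecomp : ∀ d : Bool, (∫ ω in {ω | D ω = d}, Y ω)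
      = ∑ s ∈ Finset.range (n + 1), ∫ ω in {ω | D ω = d ∧ S ω = s}, Y ω := by
    intro d
    rw [hUnion d]
    exact integral_biUnion_finset _ (fun s _ => hABmeas d s) (hdisj d)
      (fun s _ => hint.integrableOn)
  -- each piece integral
  have hpiece : ∀ (d : Bool) (s : ℕ), s ∈ Finset.range (n + 1) →
      (∫ ω in {ω | D ω = d ∧ S ω = s}, Y ω)
        = μf d s * ((ℙ {ω | D ω = d}).toReal * (ℙ {ω | S ω = s}).toReal) := by
    intro d s hs
    rw [Finset.mem_range, Nat.lt_succ_iff] at hs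
    have h := hid d s hs
    have hne : (ℙ {ω | D ω = d ∧ S ω = s}).toReal ≠ 0 :=
      ENNReal.toReal_ne_zero.mpr ⟨(hpos d s hs).ne', measure_ne_top _ _⟩
    have h2 : (∫ ω in {ω | D ω = d ∧ S ω = s}, Y ω)
        = μf d s * (ℙ {ω | D ω = d ∧ S ω = s}).toReal := by
      field_simp at h ⊢
      linarith [h]
    rw [h2, hindep' d s, ENNReal.toReal_mul]
  -- mean formula
  have hmean : ∀ d : Bool,
      (∫ ω in {ω | D ω = d}, Y ω) / (ℙ {ω | D ω = d}).toReal
        = ∑ s ∈ Finset.range (n + 1), μf d s * (ℙ {ω | S ω = s}).toReal := by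
    intro d
    rw [hIdecomp d, Finset.sum_congr rfl (hpiece d)]
    rw [eq_comm, eq_div_iff (hAne d), Finset.sum_mul]
    exact Finset.sum_congr rfl (fun s _ => by ring)
  rw [hmean, hmean]
  -- total probability
  have htot : ∑ s ∈ Finset.range (n + 1), (ℙ {ω | S ω = s}).toReal = 1 := by
    have hU : (Set.univ : Set Ω) = ⋃ s ∈ Finset.range (n + 1), {ω | S ω = s} := by
      ext ω
      simp only [Set.mem_univ, true_iff, Set.mem_iUnion, Finset.mem_range, Set.mem_setOf_eq]
      exact ⟨S ω, Nat.lt_succ_of_le (hSle ω), rfl⟩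
    have : ℙ (Set.univ : Set Ω) = ∑ s ∈ Finset.range (n + 1), ℙ {ω | S ω = s} := by
      rw [hU]
      exact measure_biUnion_finset
        (fun s _ t _ hst => by
          simp only [Function.onFun, Set.disjoint_left, Set.mem_setOf_eq]
          rintro ω h1 h2; exact hst (h1 ▸ h2 ▸ rfl))
        (fun s _ => hBmeas s)
    have h1 : (ℙ (Set.univ : Set Ω)).toReal = 1 := by simp
    rw [this, ENNReal.toReal_sum (fun s _ => measure_ne_top _ _)] at h1
    exact h1
  -- split off s = 0
  have hsplit : ∀ f : ℕ → ℝ, ∑ s ∈ Finset.range (n + 1), f s = f 0 + ∑ s ∈ Finset.Icc 1 n, f s := by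
    intro f
    have : Finset.range (n + 1) = insert 0 (Finset.Icc 1 n) := by
      ext s
      simp only [Finset.mem_range, Finset.mem_insert, Finset.mem_Icc]
      omega
    rw [this, Finset.sum_insert (by simp)]
  rw [hsplit] at htot
  rw [hsplit, hsplit]
  have hsum1 : ∑ s ∈ Finset.Icc 1 n,
      ((μf true s - μf true 0) - (μf false s - μf false 0)) * (ℙ {ω | S ω = s}).toReal
      = (∑ s ∈ Finset.Icc 1 n, μf true s * (ℙ {ω | S ω = s}).toReal)
        - (∑ s ∈ Finset.Icc 1 n, μf false s * (ℙ {ω | S ω = s}).toReal)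
        - (μf true 0 - μf false 0) * ∑ s ∈ Finset.Icc 1 n, (ℙ {ω | S ω = s}).toReal := by
    rw [Finset.mul_sum, ← Finset.sum_sub_distrib, ← Finset.sum_sub_distrib]
    exact Finset.sum_congr rfl (fun s _ => by ring)
  rw [hsum1]
  have h0 : (ℙ {ω | S ω = 0}).toReal = 1 - ∑ s ∈ Finset.Icc 1 n, (ℙ {ω | S ω = s}).toReal := by linarith [htot]
  rw [h0]
  ring
end

section
/- Let D ⊥ S with D Bernoulli(p), S taking values in {0,…,n} with Var(S) > 0, and E[Y | D, S] = μ(0,0) + τ_0 D + Σ_{s=1}^n θ_s(0) 1(S=s)(1−D) + Σ_{s=1}^n θ_s(1) 1(S=s) D. Define the population linear regression of Y on (1, D, S/n), and let γ_ℓ be the coefficient on S/n. Then γ_ℓ = n Σ_{s=1}^{n} [θ_s(0)(1−p) + θ_s(1)p] · (s − E[S]) P[S=s] / Var(S). -/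
open MeasureTheory ProbabilityTheory Finset
open scoped ProbabilityTheory

private lemma foc_zero {Ω : Type*} [MeasureSpace Ω] [IsProbabilityMeasure (ℙ : Measure Ω)]
    {R v : Ω → ℝ} (hR2 : Integrable (fun ω => R ω ^ 2)) (hRv : Integrable (fun ω => R ω * v ω))
    (hv2 : Integrable (fun ω => v ω ^ 2))
    (hmin : ∀ t : ℝ, (∫ ω, R ω ^ 2) ≤ ∫ ω, (R ω - t * v ω) ^ 2) :
    ∫ ω, R ω * v ω = 0 := by
  set A := ∫ ω, R ω * v ω with hA
  set B := ∫ ω, v ω ^ 2 with hBdef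
  have hB : 0 ≤ B := integral_nonneg fun ω => sq_nonneg _
  have key : ∀ t : ℝ, 0 ≤ t ^ 2 * B - 2 * t * A := by
    intro t
    have hexp : ∀ ω, (R ω - t * v ω) ^ 2
        = R ω ^ 2 - (2 * t) * (R ω * v ω) + t ^ 2 * (v ω ^ 2) := fun ω => by ring
    have heq : (∫ ω, (R ω - t * v ω) ^ 2) = (∫ ω, R ω ^ 2) - (2 * t) * A + t ^ 2 * B := by
      simp_rw [hexp]
      have h1 : Integrable (fun ω => R ω ^ 2 - 2 * t * (R ω * v ω)) :=
        hR2.sub (hRv.const_mul _)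
      have h2 : Integrable (fun ω => t ^ 2 * v ω ^ 2) := hv2.const_mul _
      rw [integral_add h1 h2, integral_sub hR2 (hRv.const_mul _),
        integral_const_mul, integral_const_mul]
    have h := hmin t
    rw [heq] at h
    linarith
  have hB1 : (0:ℝ) < B + 1 := by linarith
  set u := A / (B + 1) with hu
  have hAu : A = u * (B + 1) := by rw [hu, div_mul_cancel₀ A hB1.ne']
  have hq := key u
  rw [hAu] at hq ⊢
  have hu0 : u = 0 := by nlinarith
  rw [hu0]; ring

private lemma partition_integral {Ω : Type*} [MeasureSpace Ω] [IsProbabilityMeasure (ℙ : Measure Ω)]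
    (n : ℕ) {Y : Ω → ℝ} {D : Ω → Bool} {S : Ω → ℕ}
    (hDmeas : Measurable D) (hSmeas : Measurable S)
    (hint : Integrable Y) (hSle : ∀ ω, S ω ≤ n) (f : Bool → ℕ → ℝ) :
    ∫ ω, Y ω * f (D ω) (S ω) =
      ∑ d : Bool, ∑ s ∈ Finset.range (n+1), f d s * ∫ ω in {ω | D ω = d ∧ S ω = s}, Y ω := by
  have hCmeas : ∀ d s, MeasurableSet {ω | D ω = d ∧ S ω = s} := fun d s =>
    (hDmeas (measurableSet_singleton d)).inter (hSmeas (measurableSet_singleton s))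
  have hφm : Measurable fun ω => f (D ω) (S ω) :=
    (Measurable.of_discrete (f := fun q : Bool × ℕ => f q.1 q.2)).comp (hDmeas.prodMk hSmeas)
  set C : Bool × ℕ → Set Ω := fun q => {ω | D ω = q.1 ∧ S ω = q.2} with hC
  set t : Finset (Bool × ℕ) := Finset.univ ×ˢ Finset.range (n+1) with ht
  have hCm : ∀ q : Bool × ℕ, MeasurableSet (C q) := fun q => hCmeas q.1 q.2
  have hdisj : Set.Pairwise ↑t (Function.onFun Disjoint C) := by
    intro q _ q' _ hne
    simp only [Function.onFun, Set.disjoint_left]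
    intro ω h1 h2
    simp only [hC, Set.mem_setOf_eq] at h1 h2
    exact hne (Prod.ext (h1.1.symm.trans h2.1) (h1.2.symm.trans h2.2))
  have hcover : ⋃ q ∈ t, C q = Set.univ := by
    ext ω
    simp only [Set.mem_iUnion, Set.mem_univ, iff_true]
    exact ⟨(D ω, S ω), by simp [ht, Nat.lt_succ_iff, hSle ω], ⟨rfl, rfl⟩⟩
  have hbound : ∀ᵐ ω ∂(ℙ : Measure Ω), ‖f (D ω) (S ω)‖ ≤ ∑ q ∈ t, ‖f q.1 q.2‖ := by
    refine ae_of_all _ fun ω => ?_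
    have hmem : (D ω, S ω) ∈ t := by simp [ht, Nat.lt_succ_iff, hSle ω]
    exact Finset.single_le_sum (f := fun q : Bool × ℕ => ‖f q.1 q.2‖)
      (fun q _ => norm_nonneg _) hmem
  have hg : Integrable (fun ω => Y ω * f (D ω) (S ω)) := by
    have h := hint.bdd_mul (f := fun ω => f (D ω) (S ω)) hφm.aestronglyMeasurable hbound
    exact h.congr (ae_of_all _ fun ω => mul_comm _ _)
  calc ∫ ω, Y ω * f (D ω) (S ω)
      = ∫ ω in ⋃ q ∈ t, C q, Y ω * f (D ω) (S ω) := by rw [hcover, setIntegral_univ]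
    _ = ∑ q ∈ t, ∫ ω in C q, Y ω * f (D ω) (S ω) :=
        integral_biUnion_finset t (fun q _ => hCm q) hdisj (fun q _ => hg.integrableOn)
    _ = ∑ q ∈ t, f q.1 q.2 * ∫ ω in C q, Y ω := by
        refine Finset.sum_congr rfl fun q _ => ?_
        have heq : ∀ ω ∈ C q, Y ω * f (D ω) (S ω) = f q.1 q.2 * Y ω := by
          intro ω hω
          simp only [hC, Set.mem_setOf_eq] at hω
          rw [hω.1, hω.2]; ring
        rw [setIntegral_congr_fun (hCm q) heq, integral_const_mul]
    _ = ∑ d : Bool, ∑ s ∈ Finset.range (n+1), f d s * ∫ ω in {ω | D ω = d ∧ S ω = s}, Y ω := by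
        rw [ht, Finset.sum_product]

/-- Lemma 6 (LIM regression): the population coefficient on the proportion of treated
neighbors in a linear-in-means regression is a signed linear combination of spillover
effects. -/
theorem stmt_6 {Ω : Type*} [MeasureSpace Ω] [IsProbabilityMeasure (ℙ : Measure Ω)]
    (n : ℕ) (hn : 1 ≤ n) (Y : Ω → ℝ) (D : Ω → Bool) (S : Ω → ℕ)
    (hYmeas : Measurable Y) (hDmeas : Measurable D) (hSmeas : Measurable S)
    (hint : Integrable Y) (hint2 : Integrable (fun ω => (Y ω) ^ 2))
    (hSle : ∀ ω, S ω ≤ n)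
    (p : ℝ) (hp0 : 0 < p) (hp1 : p < 1)
    (hBern : (ℙ {ω | D ω = true}).toReal = p)
    (hindep : IndepFun D S ℙ)
    (hvar : 0 < variance (fun ω => (S ω : ℝ)) ℙ)
    (hpos : ∀ (d : Bool) (s : ℕ), s ≤ n → 0 < ℙ {ω | D ω = d ∧ S ω = s})
    (μ00 τ0 : ℝ) (θ0 θ1 : ℕ → ℝ)
    (hmodel : ∀ (d : Bool) (s : ℕ), s ≤ n →
      (∫ ω in {ω | D ω = d ∧ S ω = s}, Y ω) /
        (ℙ {ω | D ω = d ∧ S ω = s}).toReal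
        = μ00 + τ0 * (if d then 1 else 0) +
          (if 1 ≤ s then (if d then θ1 s else θ0 s) else 0))
    (a b c : ℝ)
    (hmin : ∀ a' b' c' : ℝ,
      (∫ ω, (Y ω - a - b * (if D ω then 1 else 0) - c * ((S ω : ℝ) / n)) ^ 2) ≤
      (∫ ω, (Y ω - a' - b' * (if D ω then 1 else 0) - c' * ((S ω : ℝ) / n)) ^ 2)) :
    c = n * ∑ s ∈ Finset.Icc 1 n,
        (θ0 s * (1 - p) + θ1 s * p) *
          (((s : ℝ) - ∫ ω, (S ω : ℝ)) * (ℙ {ω | S ω = s}).toReal /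
            variance (fun ω => (S ω : ℝ)) ℙ) := by
  have hn0 : (n:ℝ) ≠ 0 := Nat.cast_ne_zero.mpr (by omega)
  have hnpos : (0:ℝ) < n := Nat.cast_pos.mpr (by omega)
  set ES := ∫ ω, (S ω : ℝ) with hESdef
  set Var := variance (fun ω => (S ω : ℝ)) ℙ with hVardef
  have hV0 : Var ≠ 0 := ne_of_gt hvar
  -- measurability
  have hSrm : Measurable fun ω => (S ω : ℝ) :=
    (Measurable.of_discrete (f := (Nat.cast : ℕ → ℝ))).comp hSmeas
  have hindm : Measurable fun ω => (if D ω then (1:ℝ) else 0) :=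
    (Measurable.of_discrete (f := fun d : Bool => if d then (1:ℝ) else 0)).comp hDmeas
  -- integrability helpers
  have hbd : ∀ (g : Ω → ℝ) (Cb : ℝ), Measurable g → (∀ ω, |g ω| ≤ Cb) → Integrable g :=
    fun g Cb hm hb => memLp_one_iff_integrable.mp (MemLp.of_bound hm.aestronglyMeasurable Cb
      (Filter.Eventually.of_forall fun ω => by simpa [Real.norm_eq_abs] using hb ω))
  have hmulY : ∀ (g : Ω → ℝ) (Cb : ℝ), Measurable g → (∀ ω, |g ω| ≤ Cb) →
      Integrable (fun ω => Y ω * g ω) := fun g Cb hm hb =>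
    (hint.bdd_mul (c := Cb) hm.aestronglyMeasurable
      (Filter.Eventually.of_forall fun ω => by simpa [Real.norm_eq_abs] using hb ω)).congr
      (Filter.Eventually.of_forall fun ω => mul_comm _ _)
  -- bounds
  have hindb : ∀ ω, |(if D ω then (1:ℝ) else 0)| ≤ 1 := fun ω => by split <;> norm_num
  have hSrb : ∀ ω, |(S ω : ℝ)| ≤ n := fun ω => by
    rw [abs_of_nonneg (by positivity)]; exact_mod_cast hSle ω
  have hSrn0 : ∀ ω, (0:ℝ) ≤ (S ω:ℝ)/n := fun ω => by positivity
  have hSrn1 : ∀ ω, (S ω:ℝ)/n ≤ 1 := fun ω => by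
    rw [div_le_one hnpos]; exact_mod_cast hSle ω
  set G : Ω → ℝ := fun ω => a + b * (if D ω then (1:ℝ) else 0) + c * ((S ω : ℝ)/n) with hG
  have hGm : Measurable G := (measurable_const.add (hindm.const_mul b)).add
    ((hSrm.div_const n).const_mul c)
  have hGb : ∀ ω, |G ω| ≤ |a| + |b| + |c| := by
    intro ω
    have h1 := hindb ω; have h2 := hSrn0 ω; have h3 := hSrn1 ω
    calc |G ω| ≤ |a| + |b * (if D ω then (1:ℝ) else 0)| + |c * ((S ω:ℝ)/n)| :=
          abs_add_three _ _ _
      _ ≤ |a| + |b| + |c| := by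
          rw [abs_mul, abs_mul]
          have h4 : |(S ω:ℝ)/n| ≤ 1 := by rw [abs_of_nonneg h2]; exact h3
          nlinarith [abs_nonneg b, abs_nonneg c, abs_nonneg (if D ω then (1:ℝ) else 0)]
  set R : Ω → ℝ := fun ω => Y ω - G ω with hRdef
  have hiG : Integrable G := hbd G _ hGm hGb
  have hiR : Integrable R := hint.sub hiG
  have hiYG : Integrable (fun ω => Y ω * G ω) := hmulY G _ hGm hGb
  have hiG2 : Integrable (fun ω => G ω ^ 2) := by
    refine hbd _ ((|a|+|b|+|c|)^2) (hGm.pow_const 2) fun ω => ?_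
    rw [abs_pow]
    exact pow_le_pow_left₀ (abs_nonneg _) (hGb ω) 2
  have hR2 : Integrable (fun ω => R ω ^ 2) := by
    have he : (fun ω => R ω ^ 2) = fun ω => Y ω ^ 2 - 2 * (Y ω * G ω) + G ω ^ 2 :=
      funext fun ω => by simp only [hRdef]; ring
    rw [he]
    exact (hint2.sub (hiYG.const_mul 2)).add hiG2
  -- first-order condition in the constant direction
  have hfoc1 : ∫ ω, R ω = 0 := by
    have h0 : ∫ ω, R ω * (1:ℝ) = 0 := by
      apply foc_zero hR2 (by simpa using hiR) (by simpa using integrable_const (1:ℝ))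
      intro t
      have h := hmin (a + t) b c
      have e1 : (∫ ω, (Y ω - a - b * (if D ω then (1:ℝ) else 0) - c * ((S ω:ℝ)/↑n))^2)
          = ∫ ω, R ω ^ 2 :=
        integral_congr_ae (Filter.Eventually.of_forall fun ω => by
          simp only [hRdef, hG]; ring)
      have e2 : (∫ ω, (Y ω - (a+t) - b * (if D ω then (1:ℝ) else 0) - c * ((S ω:ℝ)/↑n))^2)
          = ∫ ω, (R ω - t * 1)^2 :=
        integral_congr_ae (Filter.Eventually.of_forall fun ω => by
          simp only [hRdef, hG]; ring)
      rw [e1, e2] at h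
      exact h
    simpa using h0
  -- first-order condition in the slope direction
  have hiRSr : Integrable (fun ω => R ω * (S ω:ℝ)) := by
    have he : (fun ω => R ω * (S ω:ℝ)) = fun ω => Y ω * (S ω:ℝ) - G ω * (S ω:ℝ) :=
      funext fun ω => by simp only [hRdef]; ring
    rw [he]
    refine (hmulY _ n hSrm hSrb).sub (hbd _ ((|a|+|b|+|c|)*n) (hGm.mul hSrm) fun ω => ?_)
    rw [abs_mul]
    exact mul_le_mul (hGb ω) (hSrb ω) (abs_nonneg _) (by positivity)
  have hfoc3 : ∫ ω, R ω * (S ω:ℝ) = 0 := by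
    have h0 : ∫ ω, R ω * ((S ω:ℝ)/n) = 0 := by
      apply foc_zero hR2
      · have he : (fun ω => R ω * ((S ω:ℝ)/n)) = fun ω => (R ω * (S ω:ℝ))/n :=
          funext fun ω => by ring
        rw [he]; exact hiRSr.div_const n
      · refine hbd _ 1 ((hSrm.div_const n).pow_const 2) fun ω => ?_
        rw [abs_of_nonneg (by positivity)]
        nlinarith [hSrn0 ω, hSrn1 ω]
      · intro t
        have h := hmin a b (c + t)
        have e1 : (∫ ω, (Y ω - a - b * (if D ω then (1:ℝ) else 0) - c * ((S ω:ℝ)/↑n))^2)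
            = ∫ ω, R ω ^ 2 :=
          integral_congr_ae (Filter.Eventually.of_forall fun ω => by
            simp only [hRdef, hG]; ring)
        have e2 : (∫ ω, (Y ω - a - b * (if D ω then (1:ℝ) else 0) - (c+t) * ((S ω:ℝ)/↑n))^2)
            = ∫ ω, (R ω - t * ((S ω:ℝ)/n))^2 :=
          integral_congr_ae (Filter.Eventually.of_forall fun ω => by
            simp only [hRdef, hG]; ring)
        rw [e1, e2] at h
        exact h
    have he : (fun ω => R ω * ((S ω:ℝ)/n)) = fun ω => (R ω * (S ω:ℝ))/n :=
      funext fun ω => by ring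
    rw [he, integral_div] at h0
    exact (div_eq_zero_iff.mp h0).resolve_right hn0
  -- basic moments
  have hDsetm : MeasurableSet {ω | D ω = true} := hDmeas (measurableSet_singleton true)
  have hPind : ∫ ω, (if D ω then (1:ℝ) else 0) = p := by
    calc ∫ ω, (if D ω then (1:ℝ) else 0)
        = ∫ ω, Set.indicator {ω | D ω = true} (1 : Ω → ℝ) ω :=
          integral_congr_ae (Filter.Eventually.of_forall fun ω => by
            by_cases h : D ω <;> simp [Set.indicator_apply, h])
      _ = (ℙ {ω | D ω = true}).toReal := integral_indicator_one hDsetm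
      _ = p := hBern
  have hPG : ∫ ω, G ω = a + b * p + c * (ES / n) := by
    have h1 : Integrable (fun ω => b * (if D ω then (1:ℝ) else 0)) :=
      (hbd _ 1 hindm hindb).const_mul b
    have h2 : Integrable (fun ω => c * ((S ω:ℝ)/n)) :=
      (((hbd _ n hSrm hSrb).div_const n).const_mul c)
    have h0 : Integrable (fun ω => a + b * (if D ω then (1:ℝ) else 0)) := by
      exact (integrable_const a).add h1
    rw [hG]
    rw [integral_add h0 h2, integral_add (integrable_const a) h1,
      integral_const, integral_const_mul, integral_const_mul, hPind, integral_div, ← hESdef]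
    simp [measure_univ]
  have hindepR : IndepFun (fun ω => if D ω then (1:ℝ) else 0) (fun ω => (S ω:ℝ)) ℙ :=
    hindep.comp (Measurable.of_discrete (f := fun d : Bool => if d then (1:ℝ) else 0))
      (Measurable.of_discrete (f := (Nat.cast : ℕ → ℝ)))
  have hPindSr : ∫ ω, (if D ω then (1:ℝ) else 0) * (S ω:ℝ) = p * ES := by
    have h := hindepR.integral_fun_mul_eq_mul_integral (hbd _ 1 hindm hindb).aestronglyMeasurable
      (hbd _ n hSrm hSrb).aestronglyMeasurable
    rw [hPind, ← hESdef] at h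
    exact h
  -- cell measures
  have hcell : ∀ d s, (ℙ {ω | D ω = d ∧ S ω = s}).toReal
      = (if d then p else 1 - p) * (ℙ {ω | S ω = s}).toReal := by
    intro d s
    have hset : {ω | D ω = d ∧ S ω = s} = D ⁻¹' {d} ∩ S ⁻¹' {s} := by
      ext ω; simp [Set.mem_preimage]
    rw [hset, hindep.measure_inter_preimage_eq_mul _ _ (measurableSet_singleton d)
      (measurableSet_singleton s), ENNReal.toReal_mul]
    have hs : S ⁻¹' {s} = {ω | S ω = s} := by ext ω; simp
    rw [hs]
    congr 1
    cases d
    · have hd : D ⁻¹' {false} = {ω | D ω = true}ᶜ := by ext ω; simp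
      rw [hd, measure_compl hDsetm (measure_ne_top _ _), measure_univ,
        ENNReal.toReal_sub_of_le prob_le_one ENNReal.one_ne_top, ENNReal.toReal_one, hBern]
      simp
    · have hd : D ⁻¹' {true} = {ω | D ω = true} := by ext ω; simp
      rw [hd, hBern]; simp
  have hcellY : ∀ d s, s ≤ n → (∫ ω in {ω | D ω = d ∧ S ω = s}, Y ω)
      = (μ00 + τ0 * (if d then 1 else 0) +
          (if 1 ≤ s then (if d then θ1 s else θ0 s) else 0)) *
        ((if d then p else 1 - p) * (ℙ {ω | S ω = s}).toReal) := by
    intro d s hs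
    have h := hmodel d s hs
    have hm0 : (ℙ {ω | D ω = d ∧ S ω = s}).toReal ≠ 0 :=
      (ENNReal.toReal_pos (hpos d s hs).ne' (measure_ne_top _ _)).ne'
    rw [div_eq_iff hm0] at h
    rw [h, hcell d s]
  have hcell1 : ∀ d s, (∫ ω in {ω | D ω = d ∧ S ω = s}, (1:ℝ))
      = (if d then p else 1 - p) * (ℙ {ω | S ω = s}).toReal := by
    intro d s
    rw [setIntegral_const, smul_eq_mul, mul_one, measureReal_def, hcell]
  -- partition computations
  have hπ1 : ∑ s ∈ Finset.range (n+1), (ℙ {ω | S ω = s}).toReal = 1 := by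
    have h := partition_integral n (Y := fun _ => (1:ℝ)) hDmeas hSmeas
      (integrable_const 1) hSle (fun _ _ => 1)
    simp only [measureReal_def, mul_one, one_mul, integral_const, measure_univ, ENNReal.toReal_one,
      smul_eq_mul, Measure.restrict_apply_univ] at h
    rw [Fintype.sum_bool, ← Finset.sum_add_distrib] at h
    rw [h]
    refine Finset.sum_congr rfl fun s hs => ?_
    rw [hcell true s, hcell false s]; norm_num; ring
  have hESsum : ES = ∑ s ∈ Finset.range (n+1), (s:ℝ) * (ℙ {ω | S ω = s}).toReal := by
    have h := partition_integral n (Y := fun _ => (1:ℝ)) hDmeas hSmeas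
      (integrable_const 1) hSle (fun _ s => (s:ℝ))
    simp only [one_mul] at h
    rw [← hESdef, Fintype.sum_bool, ← Finset.sum_add_distrib] at h
    rw [h]
    refine Finset.sum_congr rfl fun s hs => ?_
    rw [hcell1 true s, hcell1 false s]; norm_num; ring
  have hES2sum : (∫ ω, (S ω:ℝ)^2)
      = ∑ s ∈ Finset.range (n+1), (s:ℝ)^2 * (ℙ {ω | S ω = s}).toReal := by
    have h := partition_integral n (Y := fun _ => (1:ℝ)) hDmeas hSmeas
      (integrable_const 1) hSle (fun _ s => (s:ℝ)^2)
    simp only [one_mul] at h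
    rw [Fintype.sum_bool, ← Finset.sum_add_distrib] at h
    rw [h]
    refine Finset.sum_congr rfl fun s hs => ?_
    rw [hcell1 true s, hcell1 false s]; norm_num; ring
  have hmem2 : MemLp (fun ω => (S ω:ℝ)) 2 ℙ :=
    MemLp.of_bound hSrm.aestronglyMeasurable n
      (Filter.Eventually.of_forall fun ω => by simpa [Real.norm_eq_abs] using hSrb ω)
  have hVar : Var = (∫ ω, (S ω:ℝ)^2) - ES^2 := by
    rw [hVardef, variance_eq_sub hmem2]
    rfl
  have hEY : ∫ ω, Y ω = (μ00 + τ0 * p) + ∑ s ∈ Finset.range (n+1),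
      (if 1 ≤ s then θ0 s * (1-p) + θ1 s * p else 0) * (ℙ {ω | S ω = s}).toReal := by
    have h := partition_integral n hDmeas hSmeas hint hSle (fun _ _ => 1)
    simp only [one_mul, mul_one] at h
    rw [h, Fintype.sum_bool, ← Finset.sum_add_distrib]
    have hterm : ∀ s ∈ Finset.range (n+1),
        (∫ ω in {ω | D ω = true ∧ S ω = s}, Y ω) + (∫ ω in {ω | D ω = false ∧ S ω = s}, Y ω)
        = (μ00 + τ0 * p) * (ℙ {ω | S ω = s}).toReal +
          (if 1 ≤ s then θ0 s * (1-p) + θ1 s * p else 0) * (ℙ {ω | S ω = s}).toReal := by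
      intro s hs
      rw [hcellY true s (Nat.lt_succ_iff.mp (Finset.mem_range.mp hs)),
        hcellY false s (Nat.lt_succ_iff.mp (Finset.mem_range.mp hs))]
      by_cases h1 : 1 ≤ s <;> simp only [h1, if_true, if_false, ite_true, ite_false] <;> (norm_num; try ring)
    rw [Finset.sum_congr rfl hterm, Finset.sum_add_distrib, ← Finset.mul_sum, hπ1, mul_one]
  have hEYS : ∫ ω, Y ω * (S ω:ℝ) = (μ00 + τ0 * p) * ES + ∑ s ∈ Finset.range (n+1),
      (if 1 ≤ s then θ0 s * (1-p) + θ1 s * p else 0) * (s:ℝ) * (ℙ {ω | S ω = s}).toReal := by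
    have h := partition_integral n hDmeas hSmeas hint hSle (fun _ s => (s:ℝ))
    rw [h, Fintype.sum_bool, ← Finset.sum_add_distrib]
    have hterm : ∀ s ∈ Finset.range (n+1),
        (s:ℝ) * (∫ ω in {ω | D ω = true ∧ S ω = s}, Y ω) +
          (s:ℝ) * (∫ ω in {ω | D ω = false ∧ S ω = s}, Y ω)
        = (μ00 + τ0 * p) * ((s:ℝ) * (ℙ {ω | S ω = s}).toReal) +
          (if 1 ≤ s then θ0 s * (1-p) + θ1 s * p else 0) * (s:ℝ) *
            (ℙ {ω | S ω = s}).toReal := by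
      intro s hs
      rw [hcellY true s (Nat.lt_succ_iff.mp (Finset.mem_range.mp hs)),
        hcellY false s (Nat.lt_succ_iff.mp (Finset.mem_range.mp hs))]
      by_cases h1 : 1 ≤ s <;> simp only [h1, if_true, if_false, ite_true, ite_false] <;> (norm_num; try ring)
    rw [Finset.sum_congr rfl hterm, Finset.sum_add_distrib, ← Finset.mul_sum, ← hESsum]
  -- regression equations
  have hEq1 : ∫ ω, Y ω = a + b * p + c * (ES / n) := by
    have hsplit : ∫ ω, R ω = (∫ ω, Y ω) - ∫ ω, G ω := by
      have he : R = fun ω => Y ω - G ω := hRdef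
      rw [he, integral_sub hint hiG]
    rw [hfoc1] at hsplit
    rw [hPG] at hsplit
    linarith
  have hiIndSr : Integrable (fun ω => (if D ω then (1:ℝ) else 0) * (S ω:ℝ)) := by
    refine hbd _ ((1:ℝ) * n) (hindm.mul hSrm) fun ω => ?_
    rw [abs_mul]
    exact mul_le_mul (hindb ω) (hSrb ω) (abs_nonneg _) zero_le_one
  have hiSr2 : Integrable (fun ω => (S ω:ℝ)^2) := by
    refine hbd _ ((n:ℝ)^2) (hSrm.pow_const 2) fun ω => ?_
    rw [abs_pow]
    exact pow_le_pow_left₀ (abs_nonneg _) (hSrb ω) 2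
  have hEq3 : ∫ ω, Y ω * (S ω:ℝ)
      = a * ES + b * (p * ES) + c * ((∫ ω, (S ω:ℝ)^2) / n) := by
    have hGS : ∫ ω, G ω * (S ω:ℝ)
        = a * ES + b * (p * ES) + c * ((∫ ω, (S ω:ℝ)^2) / n) := by
      have he : (fun ω => G ω * (S ω:ℝ)) = fun ω =>
          (a * (S ω:ℝ) + b * ((if D ω then (1:ℝ) else 0) * (S ω:ℝ))) + c * ((S ω:ℝ)^2 / n) :=
        funext fun ω => by simp only [hG]; ring
      have hA : Integrable (fun ω => a * (S ω:ℝ)) := (hbd _ n hSrm hSrb).const_mul a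
      have hB : Integrable (fun ω => b * ((if D ω then (1:ℝ) else 0) * (S ω:ℝ))) :=
        hiIndSr.const_mul b
      have hAB : Integrable (fun ω =>
          a * (S ω:ℝ) + b * ((if D ω then (1:ℝ) else 0) * (S ω:ℝ))) := hA.add hB
      have hC : Integrable (fun ω => c * ((S ω:ℝ)^2 / n)) := (hiSr2.div_const n).const_mul c
      rw [he, integral_add hAB hC, integral_add hA hB, integral_const_mul, integral_const_mul,
        integral_const_mul, integral_div, hPindSr, ← hESdef]
    have hsplit : ∫ ω, R ω * (S ω:ℝ)
        = (∫ ω, Y ω * (S ω:ℝ)) - ∫ ω, G ω * (S ω:ℝ) := by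
      have he : (fun ω => R ω * (S ω:ℝ)) = fun ω => Y ω * (S ω:ℝ) - G ω * (S ω:ℝ) :=
        funext fun ω => by simp only [hRdef]; ring
      rw [he, integral_sub (hmulY _ n hSrm hSrb) (hbd (fun ω => G ω * (S ω:ℝ)) ((|a|+|b|+|c|)*n)
        (hGm.mul hSrm) fun ω => by
          rw [abs_mul]
          exact mul_le_mul (hGb ω) (hSrb ω) (abs_nonneg _) (by positivity))]
    rw [hfoc3] at hsplit
    rw [hGS] at hsplit
    linarith
  have hkey : c / n * Var = (∫ ω, Y ω * (S ω:ℝ)) - ES * ∫ ω, Y ω := by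
    rw [hVar]
    linear_combination ES * hEq1 - hEq3
  -- identify the covariance with the spillover sum
  have hnum : (∫ ω, Y ω * (S ω:ℝ)) - ES * ∫ ω, Y ω
      = ∑ s ∈ Finset.Icc 1 n, (θ0 s * (1-p) + θ1 s * p) *
          (((s:ℝ) - ES) * (ℙ {ω | S ω = s}).toReal) := by
    rw [hEYS, hEY]
    have step1 : (μ00 + τ0 * p) * ES + (∑ s ∈ Finset.range (n+1),
        (if 1 ≤ s then θ0 s * (1-p) + θ1 s * p else 0) * (s:ℝ) * (ℙ {ω | S ω = s}).toReal)
        - ES * ((μ00 + τ0 * p) + ∑ s ∈ Finset.range (n+1),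
          (if 1 ≤ s then θ0 s * (1-p) + θ1 s * p else 0) * (ℙ {ω | S ω = s}).toReal)
        = ∑ s ∈ Finset.range (n+1),
          (if 1 ≤ s then θ0 s * (1-p) + θ1 s * p else 0) *
            (((s:ℝ) - ES) * (ℙ {ω | S ω = s}).toReal) := by
      have expand : ∑ s ∈ Finset.range (n+1),
          (if 1 ≤ s then θ0 s * (1-p) + θ1 s * p else 0) *
            (((s:ℝ) - ES) * (ℙ {ω | S ω = s}).toReal)
          = ∑ s ∈ Finset.range (n+1),
            ((if 1 ≤ s then θ0 s * (1-p) + θ1 s * p else 0) * (s:ℝ) *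
                (ℙ {ω | S ω = s}).toReal
              - ES * ((if 1 ≤ s then θ0 s * (1-p) + θ1 s * p else 0) *
                  (ℙ {ω | S ω = s}).toReal)) :=
        Finset.sum_congr rfl fun s _ => by ring
      rw [expand, Finset.sum_sub_distrib, ← Finset.mul_sum]
      ring
    rw [step1]
    have step2 : ∀ s ∈ Finset.range (n+1),
        (if 1 ≤ s then θ0 s * (1-p) + θ1 s * p else 0) *
          (((s:ℝ) - ES) * (ℙ {ω | S ω = s}).toReal)
        = (if 1 ≤ s then (θ0 s * (1-p) + θ1 s * p) *
            (((s:ℝ) - ES) * (ℙ {ω | S ω = s}).toReal) else 0) := fun s _ => by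
      split_ifs <;> simp
    rw [Finset.sum_congr rfl step2, ← Finset.sum_filter]
    congr 1
    ext s
    simp [Nat.lt_succ_iff]
    omega
  -- conclude
  have hfin : ∑ s ∈ Finset.Icc 1 n, (θ0 s * (1-p) + θ1 s * p) *
        (((s:ℝ) - ES) * (ℙ {ω | S ω = s}).toReal / Var)
      = ((∫ ω, Y ω * (S ω:ℝ)) - ES * ∫ ω, Y ω) / Var := by
    rw [hnum, Finset.sum_div]
    exact Finset.sum_congr rfl fun s _ => by ring
  rw [hfin, ← hkey]
  rw [mul_div_assoc, div_self hV0, mul_one, ← mul_div_assoc, mul_div_cancel_left₀ c hn0]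
end

section
/- In the setting of the previous statement, consider the population linear regression of Y on (1, D, (S/n)(1−D), (S/n)D) and let γ_ℓ^d be the coefficient on (S/n)·1(D=d) for d ∈ {0,1}. Then γ_ℓ^d = n Σ_{s=1}^{n} θ_s(d) (s − E[S]) P[S=s] / Var(S). -/
open MeasureTheory ProbabilityTheory Finset
open scoped ProbabilityTheory

lemma foc_aux {I J : ℝ} (hJ : 0 ≤ J) (h : ∀ t : ℝ, 0 ≤ -2*t*I + t^2*J) : I = 0 := by
  have hJ1 : (0:ℝ) < J + 1 := by linarith
  have h1 := h (I/(J+1))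
  have key : -2*(I/(J+1))*I + (I/(J+1))^2*J = -(I^2*(J+2))/(J+1)^2 := by
    field_simp; ring
  rw [key] at h1
  have h2 : 0 ≤ -(I^2*(J+2)) := by
    rcases div_nonneg_iff.mp h1 with ⟨h3, _⟩ | ⟨_, h4⟩
    · exact h3
    · nlinarith [pow_pos hJ1 2]
  nlinarith [sq_nonneg I]

set_option maxHeartbeats 1000000 in
/-- Lemma 7 (LIM with interactions): the coefficients on `(S/n)(1−D)` and `(S/n)D` in the
interacted linear-in-means regression are signed linear combinations of the spillover
effects under control and treatment, respectively. -/
theorem stmt_7 {Ω : Type*} [MeasureSpace Ω] [IsProbabilityMeasure (ℙ : Measure Ω)]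
    (n : ℕ) (hn : 1 ≤ n) (Y : Ω → ℝ) (D : Ω → Bool) (S : Ω → ℕ)
    (hYmeas : Measurable Y) (hDmeas : Measurable D) (hSmeas : Measurable S)
    (hint : Integrable Y) (hint2 : Integrable (fun ω => (Y ω) ^ 2))
    (hSle : ∀ ω, S ω ≤ n)
    (p : ℝ) (hp0 : 0 < p) (hp1 : p < 1)
    (hBern : (ℙ {ω | D ω = true}).toReal = p)
    (hindep : IndepFun D S ℙ)
    (hvar : 0 < variance (fun ω => (S ω : ℝ)) ℙ)
    (hpos : ∀ (d : Bool) (s : ℕ), s ≤ n → 0 < ℙ {ω | D ω = d ∧ S ω = s})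
    (μ00 τ0 : ℝ) (θ0 θ1 : ℕ → ℝ)
    (hmodel : ∀ (d : Bool) (s : ℕ), s ≤ n →
      (∫ ω in {ω | D ω = d ∧ S ω = s}, Y ω) /
        (ℙ {ω | D ω = d ∧ S ω = s}).toReal
        = μ00 + τ0 * (if d then 1 else 0) +
          (if 1 ≤ s then (if d then θ1 s else θ0 s) else 0))
    (a b c0 c1 : ℝ)
    (hmin : ∀ a' b' c0' c1' : ℝ,
      (∫ ω, (Y ω - a - b * (if D ω then 1 else 0)
          - c0 * ((S ω : ℝ) / n) * (1 - (if D ω then 1 else 0))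
          - c1 * ((S ω : ℝ) / n) * (if D ω then 1 else 0)) ^ 2) ≤
      (∫ ω, (Y ω - a' - b' * (if D ω then 1 else 0)
          - c0' * ((S ω : ℝ) / n) * (1 - (if D ω then 1 else 0))
          - c1' * ((S ω : ℝ) / n) * (if D ω then 1 else 0)) ^ 2)) :
    (c0 = n * ∑ s ∈ Finset.Icc 1 n,
        θ0 s * (((s : ℝ) - ∫ ω, (S ω : ℝ)) * (ℙ {ω | S ω = s}).toReal /
          variance (fun ω => (S ω : ℝ)) ℙ))
    ∧
    (c1 = n * ∑ s ∈ Finset.Icc 1 n,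
        θ1 s * (((s : ℝ) - ∫ ω, (S ω : ℝ)) * (ℙ {ω | S ω = s}).toReal /
          variance (fun ω => (S ω : ℝ)) ℙ)) := by
  have hnn : 0 < n := hn
  have hn0 : (0:ℝ) < n := by exact_mod_cast hnn
  -- basic measurable pieces
  have hXmeas : Measurable fun ω => (S ω : ℝ)/n :=
    ((measurable_from_top.comp hSmeas : Measurable fun ω => (S ω : ℝ))).div_const _
  have hχmeas : Measurable fun ω => (if D ω then (1:ℝ) else 0) := by
    exact Measurable.ite (hDmeas (measurableSet_singleton true)) measurable_const measurable_const
  have hXbd : ∀ ω, 0 ≤ (S ω : ℝ)/n ∧ (S ω : ℝ)/n ≤ 1 := by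
    intro ω
    constructor
    · positivity
    · rw [div_le_one hn0]; exact_mod_cast hSle ω
  -- integrability helpers
  have hbd_int : ∀ (g : Ω → ℝ), Measurable g → (∃ C, ∀ ω, |g ω| ≤ C) → Integrable g := by
    rintro g hg ⟨C, hC⟩
    exact (integrable_const C).mono' hg.aestronglyMeasurable
      (Filter.Eventually.of_forall fun ω => by simpa using hC ω)
  have hprod_int : ∀ (g : Ω → ℝ), Measurable g → (∃ C, ∀ ω, |g ω| ≤ C) →
      Integrable (fun ω => g ω * Y ω) := by
    rintro g hg ⟨C, hC⟩
    exact hint.bdd_mul (c := C) hg.aestronglyMeasurable (Filter.Eventually.of_forall fun ω => by simpa using hC ω)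
  -- the residual
  set R : Ω → ℝ := fun ω => Y ω - a - b * (if D ω then 1 else 0)
      - c0 * ((S ω : ℝ) / n) * (1 - (if D ω then 1 else 0))
      - c1 * ((S ω : ℝ) / n) * (if D ω then 1 else 0) with hRdef
  set W : Ω → ℝ := fun ω => - a - b * (if D ω then 1 else 0)
      - c0 * ((S ω : ℝ) / n) * (1 - (if D ω then 1 else 0))
      - c1 * ((S ω : ℝ) / n) * (if D ω then 1 else 0) with hWdef
  have hRW : ∀ ω, R ω = Y ω + W ω := by intro ω; simp only [hRdef, hWdef]; ring
  have hWmeas : Measurable W := by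
    apply Measurable.sub
    apply Measurable.sub
    apply Measurable.sub
    · exact measurable_const
    · exact hχmeas.const_mul b
    · exact (hXmeas.const_mul c0).mul (measurable_const.sub hχmeas)
    · exact (hXmeas.const_mul c1).mul hχmeas
  have hWbd : ∀ ω, |W ω| ≤ |a| + |b| + |c0| + |c1| := by
    intro ω
    obtain ⟨hx0, hx1⟩ := hXbd ω
    rw [abs_le]
    cases hD : D ω <;>
      simp only [hWdef, hD, if_true, if_false, Bool.false_eq_true, mul_one, mul_zero,
        sub_zero, mul_comm] <;>
      constructor <;>
      nlinarith [le_abs_self a, neg_abs_le a, le_abs_self b, neg_abs_le b,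
        le_abs_self c0, neg_abs_le c0, le_abs_self c1, neg_abs_le c1, abs_nonneg a,
        abs_nonneg b, abs_nonneg c0, abs_nonneg c1,
        mul_le_mul_of_nonneg_right (le_abs_self c0) hx0,
        mul_le_mul_of_nonneg_right (neg_abs_le c0) hx0,
        mul_le_mul_of_nonneg_right (le_abs_self c1) hx0,
        mul_le_mul_of_nonneg_right (neg_abs_le c1) hx0,
        mul_le_of_le_one_right (abs_nonneg c0) hx1,
        mul_le_of_le_one_right (abs_nonneg c1) hx1]
  have hRmeas : Measurable R := by
    have : R = fun ω => Y ω + W ω := funext hRW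
    rw [this]; exact hYmeas.add hWmeas
  -- integrability of residual products
  have hRZint : ∀ (Z : Ω → ℝ), Measurable Z → (∀ ω, |Z ω| ≤ 1) →
      Integrable (fun ω => R ω * Z ω) := by
    intro Z hZm hZb
    have heq : (fun ω => R ω * Z ω) = fun ω => Z ω * Y ω + Z ω * W ω := by
      funext ω; rw [hRW ω]; ring
    rw [heq]
    exact (hprod_int Z hZm ⟨1, hZb⟩).add (hbd_int _ (hZm.mul hWmeas)
      ⟨|a| + |b| + |c0| + |c1|, fun ω => by
        rw [abs_mul]
        calc |Z ω| * |W ω| ≤ 1 * (|a| + |b| + |c0| + |c1|) :=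
          mul_le_mul (hZb ω) (hWbd ω) (abs_nonneg _) zero_le_one
        _ = _ := one_mul _⟩)
  have hR2int : Integrable (fun ω => R ω ^ 2) := by
    have heq : (fun ω => R ω ^ 2) = fun ω => Y ω ^ 2 + (2 * W ω) * Y ω + W ω * W ω := by
      funext ω; rw [hRW ω]; ring
    rw [heq]
    refine (hint2.add (hprod_int _ (hWmeas.const_mul 2)
      ⟨2 * (|a| + |b| + |c0| + |c1|), fun ω => by
        rw [abs_mul]; simp only [abs_two]
        nlinarith [hWbd ω, abs_nonneg (W ω)]⟩)).add
      (hbd_int _ (hWmeas.mul hWmeas) ⟨(|a| + |b| + |c0| + |c1|)^2, fun ω => by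
        rw [abs_mul]
        nlinarith [hWbd ω, abs_nonneg (W ω)]⟩)
  -- orthogonality via first-order conditions
  have horth : ∀ (Z : Ω → ℝ), Measurable Z → (∀ ω, |Z ω| ≤ 1) →
      (∀ t : ℝ, ∃ a' b' c0' c1' : ℝ, ∀ ω, Y ω - a' - b' * (if D ω then 1 else 0)
          - c0' * ((S ω : ℝ) / n) * (1 - (if D ω then 1 else 0))
          - c1' * ((S ω : ℝ) / n) * (if D ω then 1 else 0) = R ω - t * Z ω) →
      ∫ ω, R ω * Z ω = 0 := by
    intro Z hZm hZb hpert
    have hZ2int : Integrable (fun ω => Z ω ^ 2) :=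
      hbd_int _ (hZm.pow_const 2) ⟨1, fun ω => by
        rw [abs_pow]; exact pow_le_one₀ (abs_nonneg _) (hZb ω)⟩
    apply foc_aux (integral_nonneg fun ω => sq_nonneg (Z ω))
    intro t
    obtain ⟨a', b', c0', c1', hpt⟩ := hpert t
    have hexp : (∫ ω, (R ω - t * Z ω)^2)
        = (∫ ω, R ω ^ 2) - 2*t*(∫ ω, R ω * Z ω) + t^2*(∫ ω, Z ω ^ 2) := by
      have heq : (fun ω => (R ω - t * Z ω)^2)
          = fun ω => R ω ^ 2 - (2*t) * (R ω * Z ω) + t^2 * Z ω ^ 2 := by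
        funext ω; ring
      have i1 : Integrable (fun ω => R ω ^ 2 - 2*t*(R ω * Z ω)) ℙ :=
        hR2int.sub ((hRZint Z hZm hZb).const_mul (2*t))
      have i2 : Integrable (fun ω => t^2 * Z ω ^ 2) ℙ := hZ2int.const_mul _
      rw [heq, integral_add i1 i2,
        integral_sub hR2int ((hRZint Z hZm hZb).const_mul (2*t)),
        integral_const_mul, integral_const_mul]
    have hle : (∫ ω, R ω ^ 2) ≤ ∫ ω, (R ω - t * Z ω)^2 := by
      have h1 := hmin a' b' c0' c1'
      have h2 : (∫ ω, (Y ω - a' - b' * (if D ω then 1 else 0)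
          - c0' * ((S ω : ℝ) / n) * (1 - (if D ω then 1 else 0))
          - c1' * ((S ω : ℝ) / n) * (if D ω then 1 else 0)) ^ 2)
          = ∫ ω, (R ω - t * Z ω)^2 := by
        congr 1; funext ω; rw [hpt ω]
      rw [h2] at h1
      exact h1
    rw [hexp] at hle
    linarith

  -- four orthogonality conditions
  have ho_t : ∫ ω, R ω * (if D ω then (1:ℝ) else 0) = 0 := by
    apply horth _ hχmeas (fun ω => by cases hD : D ω <;> simp [hD])
    intro t
    refine ⟨a, b + t, c0, c1, fun ω => ?_⟩
    simp only [hRdef]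
    cases hD : D ω <;> simp [hD] <;> ring
  have ho_f : ∫ ω, R ω * (1 - (if D ω then (1:ℝ) else 0)) = 0 := by
    apply horth _ (measurable_const.sub hχmeas) (fun ω => by cases hD : D ω <;> simp [hD])
    intro t
    refine ⟨a + t, b - t, c0, c1, fun ω => ?_⟩
    simp only [hRdef]
    cases hD : D ω <;> simp [hD] <;> ring
  have ho_xt : ∫ ω, R ω * (((S ω : ℝ)/n) * (if D ω then (1:ℝ) else 0)) = 0 := by
    apply horth _ (hXmeas.mul hχmeas) ?_ ?_
    · intro ω
      obtain ⟨hx0, hx1⟩ := hXbd ω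
      cases hD : D ω <;> simp [hD, abs_le] <;> constructor <;> nlinarith
    · intro t
      refine ⟨a, b, c0, c1 + t, fun ω => ?_⟩
      simp only [hRdef, Pi.mul_apply, Pi.sub_apply]; ring
  have ho_xf : ∫ ω, R ω * (((S ω : ℝ)/n) * (1 - (if D ω then (1:ℝ) else 0))) = 0 := by
    apply horth _ (hXmeas.mul (measurable_const.sub hχmeas)) ?_ ?_
    · intro ω
      obtain ⟨hx0, hx1⟩ := hXbd ω
      cases hD : D ω <;> simp [hD, abs_le] <;> constructor <;> nlinarith
    · intro t
      refine ⟨a, b, c0 + t, c1, fun ω => ?_⟩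
      simp only [hRdef, Pi.mul_apply, Pi.sub_apply]; ring
  -- atoms
  set E : Bool → ℕ → Set Ω := fun d s => {ω | D ω = d ∧ S ω = s} with hEdef
  have hEmeas : ∀ d s, MeasurableSet (E d s) := by
    intro d s
    have h1 : E d s = D ⁻¹' {d} ∩ S ⁻¹' {s} := rfl
    rw [h1]
    exact (hDmeas (measurableSet_singleton d)).inter (hSmeas (measurableSet_singleton s))
  have hsplit : ∀ g : Ω → ℝ, Integrable g →
      (∫ ω, g ω) = ∑ p ∈ (Finset.univ ×ˢ Finset.range (n+1) : Finset (Bool × ℕ)),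
        ∫ ω in E p.1 p.2, g ω := by
    intro g hg
    have hc : (⋃ p ∈ (Finset.univ ×ˢ Finset.range (n+1) : Finset (Bool × ℕ)), E p.1 p.2)
        = Set.univ := by
      apply Set.eq_univ_iff_forall.mpr
      intro ω
      exact Set.mem_biUnion (x := (D ω, S ω))
        (Finset.mem_product.mpr ⟨Finset.mem_univ _, Finset.mem_range.mpr (Nat.lt_succ_of_le (hSle ω))⟩)
        (show D ω = D ω ∧ S ω = S ω from ⟨rfl, rfl⟩)
    have hdisj : (↑(Finset.univ ×ˢ Finset.range (n+1) : Finset (Bool × ℕ)) :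
        Set (Bool × ℕ)).Pairwise (Function.onFun Disjoint fun p => E p.1 p.2) := by
      intro p _ q _ hpq
      apply Set.disjoint_left.mpr
      intro ω hωp hωq
      simp only [hEdef, Set.mem_setOf_eq] at hωp hωq
      apply hpq
      cases p; cases q; simp_all
    calc ∫ ω, g ω = ∫ ω in Set.univ, g ω := by rw [setIntegral_univ]
      _ = ∫ ω in ⋃ p ∈ (Finset.univ ×ˢ Finset.range (n+1) : Finset (Bool × ℕ)),
            E p.1 p.2, g ω := by rw [hc]
      _ = _ := integral_biUnion_finset _ (fun p _ => hEmeas p.1 p.2) hdisj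
            (fun p _ => hg.integrableOn)
  have hatom : ∀ (d : Bool) (s : ℕ) (g : Ω → ℝ) (z v : ℝ),
      (∀ ω ∈ E d s, g ω = z * Y ω + v) →
      ∫ ω in E d s, g ω = z * (∫ ω in E d s, Y ω) + v * (ℙ (E d s)).toReal := by
    intro d s g z v h
    rw [setIntegral_congr_fun (hEmeas d s) h,
      integral_add ((hint.integrableOn).const_mul z)
        (integrableOn_const (measure_ne_top _ _)),
      integral_const_mul, setIntegral_const, measureReal_def, smul_eq_mul]
    ring
  -- model values
  set μm : Bool → ℕ → ℝ := fun d s => μ00 + τ0 * (if d then 1 else 0) +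
    (if 1 ≤ s then (if d then θ1 s else θ0 s) else 0) with hμmdef
  have hI : ∀ (d : Bool) (s : ℕ), s ≤ n →
      (∫ ω in E d s, Y ω) = μm d s * (ℙ (E d s)).toReal := by
    intro d s hs
    have hP0 : 0 < (ℙ (E d s)).toReal := by
      apply ENNReal.toReal_pos _ (measure_ne_top _ _)
      show ℙ {ω | D ω = d ∧ S ω = s} ≠ 0
      exact (hpos d s hs).ne'
    have hm := hmodel d s hs
    rw [div_eq_iff hP0.ne'] at hm
    exact hm
  set ℓ : Bool → ℕ → ℝ := fun d s => a + b * (if d then 1 else 0) +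
    (if d then c1 else c0) * ((s : ℝ)/n) with hℓdef
  have hRatom : ∀ (d : Bool) (s : ℕ), ∀ ω ∈ E d s, R ω = Y ω - ℓ d s := by
    intro d s ω hω
    simp only [hEdef, Set.mem_setOf_eq] at hω
    obtain ⟨hD, hS⟩ := hω
    simp only [hRdef, hℓdef, hD, hS]
    cases d <;> simp <;> ring
  have hatomRZ : ∀ (Z : Ω → ℝ) (ζ : Bool → ℕ → ℝ),
      (∀ (d : Bool) (s : ℕ), ∀ ω ∈ E d s, Z ω = ζ d s) →
      ∀ (d : Bool) (s : ℕ), s ≤ n →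
      ∫ ω in E d s, R ω * Z ω
        = ζ d s * ((μm d s - ℓ d s) * (ℙ (E d s)).toReal) := by
    intro Z ζ hZ d s hs
    rw [hatom d s _ (ζ d s) (-(ζ d s * ℓ d s))
      (fun ω hω => by rw [hRatom d s ω hω, hZ d s ω hω]; ring)]
    rw [hI d s hs]
    ring

  -- independence factorization
  have hPqπ : ∀ (d : Bool) (s : ℕ), (ℙ (E d s)).toReal
      = (ℙ {ω | D ω = d}).toReal * (ℙ {ω | S ω = s}).toReal := by
    intro d s
    have h1 : E d s = D ⁻¹' {d} ∩ S ⁻¹' {s} := rfl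
    have h2 := hindep.measure_inter_preimage_eq_mul {d} {s}
      (measurableSet_singleton d) (measurableSet_singleton s)
    rw [h1, h2, ENNReal.toReal_mul]
    rfl
  have hq : ∀ d : Bool, 0 < (ℙ {ω | D ω = d}).toReal := by
    intro d
    apply ENNReal.toReal_pos _ (measure_ne_top _ _)
    apply ne_of_gt
    calc (0 : ENNReal) < ℙ {ω | D ω = d ∧ S ω = 0} := hpos d 0 (Nat.zero_le n)
      _ ≤ ℙ {ω | D ω = d} := measure_mono (fun ω hω => hω.1)
  -- the generic key-sum extraction
  have hkey : ∀ (Z : Ω → ℝ) (ζ : Bool → ℕ → ℝ), Measurable Z → (∀ ω, |Z ω| ≤ 1) →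
      (∀ (d : Bool) (s : ℕ), ∀ ω ∈ E d s, Z ω = ζ d s) →
      (∫ ω, R ω * Z ω = 0) →
      (∑ s ∈ Finset.range (n+1), ζ true s * ((μm true s - ℓ true s) * (ℙ (E true s)).toReal))
      + (∑ s ∈ Finset.range (n+1), ζ false s * ((μm false s - ℓ false s) * (ℙ (E false s)).toReal))
      = 0 := by
    intro Z ζ hZm hZb hζ h0
    have h1 := hsplit _ (hRZint Z hZm hZb)
    rw [h0] at h1
    have h2 : ∑ p ∈ (Finset.univ ×ˢ Finset.range (n+1) : Finset (Bool × ℕ)),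
        ∫ ω in E p.1 p.2, R ω * Z ω
        = ∑ p ∈ (Finset.univ ×ˢ Finset.range (n+1) : Finset (Bool × ℕ)),
          ζ p.1 p.2 * ((μm p.1 p.2 - ℓ p.1 p.2) * (ℙ (E p.1 p.2)).toReal) := by
      apply Finset.sum_congr rfl
      intro pp hp
      exact hatomRZ Z ζ hζ pp.1 pp.2
        (Nat.lt_succ_iff.mp (Finset.mem_range.mp (Finset.mem_product.mp hp).2))
    rw [h2, Finset.sum_product, Fintype.sum_bool] at h1
    linarith
  -- the four key sums
  have kA : ∀ d : Bool, ∑ s ∈ Finset.range (n+1),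
      (μm d s - ℓ d s) * (ℙ (E d s)).toReal = 0 := by
    intro d
    cases d
    · have h := hkey _ (fun d _ => if d then (0:ℝ) else 1)
        (measurable_const.sub hχmeas)
        (fun ω => by cases hD : D ω <;> simp [hD])
        (fun d s ω hω => by
          simp only [hEdef, Set.mem_setOf_eq] at hω
          simp only [Pi.sub_apply]; rw [hω.1]; cases d <;> simp) ho_f
      simpa using h
    · have h := hkey _ (fun d _ => if d then (1:ℝ) else 0) hχmeas
        (fun ω => by cases hD : D ω <;> simp [hD])
        (fun d s ω hω => by
          simp only [hEdef, Set.mem_setOf_eq] at hω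
          rw [hω.1]) ho_t
      simpa using h
  have kB : ∀ d : Bool, ∑ s ∈ Finset.range (n+1),
      (s : ℝ) * ((μm d s - ℓ d s) * (ℙ (E d s)).toReal) = 0 := by
    have hbnd : ∀ (W' : Ω → ℝ), (∀ ω, W' ω = 0 ∨ W' ω = 1) →
        ∀ ω, |((S ω : ℝ)/n) * W' ω| ≤ 1 := by
      intro W' hW' ω
      obtain ⟨hx0, hx1⟩ := hXbd ω
      rcases hW' ω with h | h <;> rw [h] <;> simp [abs_le] <;> constructor <;> nlinarith
    have main : ∀ d : Bool, ∑ s ∈ Finset.range (n+1),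
        ((s : ℝ)/n) * ((μm d s - ℓ d s) * (ℙ (E d s)).toReal) = 0 := by
      intro d
      cases d
      · have h := hkey _ (fun d s => if d then (0:ℝ) else (s:ℝ)/n)
          (hXmeas.mul (measurable_const.sub hχmeas))
          (hbnd _ (fun ω => by cases hD : D ω <;> simp [hD]))
          (fun d s ω hω => by
            simp only [hEdef, Set.mem_setOf_eq] at hω
            simp only [Pi.mul_apply, Pi.sub_apply]; rw [hω.1, hω.2]; cases d <;> simp) ho_xf
        simpa using h
      · have h := hkey _ (fun d s => if d then (s:ℝ)/n else (0:ℝ))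
          (hXmeas.mul hχmeas)
          (hbnd _ (fun ω => by cases hD : D ω <;> simp [hD]))
          (fun d s ω hω => by
            simp only [hEdef, Set.mem_setOf_eq] at hω
            simp only [Pi.mul_apply]; rw [hω.1, hω.2]; cases d <;> simp) ho_xt
        simpa using h
    intro d
    have h3 : ∑ s ∈ Finset.range (n+1), (s : ℝ) * ((μm d s - ℓ d s) * (ℙ (E d s)).toReal)
        = n * ∑ s ∈ Finset.range (n+1),
            ((s : ℝ)/n) * ((μm d s - ℓ d s) * (ℙ (E d s)).toReal) := by
      rw [Finset.mul_sum]
      apply Finset.sum_congr rfl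
      intro s _
      field_simp
    rw [h3, main d, mul_zero]
  -- divide out q d
  have kA' : ∀ d : Bool, ∑ s ∈ Finset.range (n+1),
      (μm d s - ℓ d s) * (ℙ {ω | S ω = s}).toReal = 0 := by
    intro d
    have h4 : ∑ s ∈ Finset.range (n+1), (μm d s - ℓ d s) * (ℙ (E d s)).toReal
        = (ℙ {ω | D ω = d}).toReal * ∑ s ∈ Finset.range (n+1),
            (μm d s - ℓ d s) * (ℙ {ω | S ω = s}).toReal := by
      rw [Finset.mul_sum]
      apply Finset.sum_congr rfl
      intro s _
      rw [hPqπ d s]; ring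
    have h5 := kA d
    rw [h4] at h5
    exact (mul_eq_zero.mp h5).resolve_left (hq d).ne'
  have kB' : ∀ d : Bool, ∑ s ∈ Finset.range (n+1),
      (s : ℝ) * ((μm d s - ℓ d s) * (ℙ {ω | S ω = s}).toReal) = 0 := by
    intro d
    have h4 : ∑ s ∈ Finset.range (n+1), (s:ℝ) * ((μm d s - ℓ d s) * (ℙ (E d s)).toReal)
        = (ℙ {ω | D ω = d}).toReal * ∑ s ∈ Finset.range (n+1),
            (s:ℝ) * ((μm d s - ℓ d s) * (ℙ {ω | S ω = s}).toReal) := by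
      rw [Finset.mul_sum]
      apply Finset.sum_congr rfl
      intro s _
      rw [hPqπ d s]; ring
    have h5 := kB d
    rw [h4] at h5
    exact (mul_eq_zero.mp h5).resolve_left (hq d).ne'

  -- moments of S
  have hFmeas : ∀ s : ℕ, MeasurableSet {ω | S ω = s} := fun s =>
    hSmeas (measurableSet_singleton s)
  have hsplitS : ∀ g : Ω → ℝ, Integrable g →
      (∫ ω, g ω) = ∑ s ∈ Finset.range (n+1), ∫ ω in {ω | S ω = s}, g ω := by
    intro g hg
    have hc : (⋃ s ∈ Finset.range (n+1), {ω | S ω = s}) = Set.univ := by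
      apply Set.eq_univ_iff_forall.mpr
      intro ω
      exact Set.mem_biUnion (x := S ω)
        (Finset.mem_range.mpr (Nat.lt_succ_of_le (hSle ω))) rfl
    have hdisj : (↑(Finset.range (n+1)) : Set ℕ).Pairwise
        (Function.onFun Disjoint fun s => {ω | S ω = s}) := by
      intro s _ t _ hst
      apply Set.disjoint_left.mpr
      intro ω h1 h2
      simp only [Set.mem_setOf_eq] at h1 h2
      exact hst (by rw [← h1, ← h2])
    calc ∫ ω, g ω = ∫ ω in Set.univ, g ω := by rw [setIntegral_univ]
      _ = ∫ ω in ⋃ s ∈ Finset.range (n+1), {ω | S ω = s}, g ω := by rw [hc]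
      _ = _ := integral_biUnion_finset _ (fun s _ => hFmeas s) hdisj
            (fun s _ => hg.integrableOn)
  have hπ1 : ∑ s ∈ Finset.range (n+1), (ℙ {ω | S ω = s}).toReal = 1 := by
    have h1 := hsplitS (fun _ => (1:ℝ)) (integrable_const 1)
    simp only [integral_const, measureReal_def, measure_univ, ENNReal.toReal_one, smul_eq_mul, mul_one,
      setIntegral_const, Measure.restrict_apply_univ] at h1
    exact h1.symm
  have hSmeas' : Measurable fun ω => (S ω : ℝ) := measurable_from_top.comp hSmeas
  have hm1 : (∫ ω, (S ω : ℝ)) = ∑ s ∈ Finset.range (n+1),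
      (s : ℝ) * (ℙ {ω | S ω = s}).toReal := by
    have hSint : Integrable (fun ω => (S ω : ℝ)) := hbd_int _ hSmeas'
      ⟨n, fun ω => by
        rw [abs_of_nonneg (by positivity)]
        exact_mod_cast hSle ω⟩
    rw [hsplitS _ hSint]
    apply Finset.sum_congr rfl
    intro s _
    rw [setIntegral_congr_fun (hFmeas s)
      (fun ω hω => by
        have hs' : S ω = s := hω
        show (S ω : ℝ) = (s : ℝ)
        exact_mod_cast hs'),
      setIntegral_const, measureReal_def, smul_eq_mul, mul_comm]
  have hm2 : (∫ ω, (S ω : ℝ)^2) = ∑ s ∈ Finset.range (n+1),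
      (s : ℝ)^2 * (ℙ {ω | S ω = s}).toReal := by
    have hSint : Integrable (fun ω => (S ω : ℝ)^2) := hbd_int _ (hSmeas'.pow_const 2)
      ⟨(n:ℝ)^2, fun ω => by
        rw [abs_of_nonneg (by positivity)]
        have : (S ω : ℝ) ≤ n := by exact_mod_cast hSle ω
        nlinarith [Nat.cast_nonneg (α := ℝ) (S ω)]⟩
    rw [hsplitS _ hSint]
    apply Finset.sum_congr rfl
    intro s _
    rw [setIntegral_congr_fun (hFmeas s)
      (fun ω hω => by
        have hs' : S ω = s := hω
        show (S ω : ℝ)^2 = ((s:ℝ))^2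
        rw [hs']),
      setIntegral_const, measureReal_def, smul_eq_mul, mul_comm]
  have hmem : MemLp (fun ω => (S ω : ℝ)) 2 ℙ := by
    apply MemLp.mono_exponent (q := ⊤) _ le_top
    apply memLp_top_of_bound hSmeas'.aestronglyMeasurable (n : ℝ)
    apply Filter.Eventually.of_forall
    intro ω
    rw [Real.norm_eq_abs, abs_of_nonneg (by positivity)]
    exact_mod_cast hSle ω
  have hVar : variance (fun ω => (S ω : ℝ)) ℙ
      = (∑ s ∈ Finset.range (n+1), (s : ℝ)^2 * (ℙ {ω | S ω = s}).toReal)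
        - (∑ s ∈ Finset.range (n+1), (s : ℝ) * (ℙ {ω | S ω = s}).toReal)^2 := by
    rw [variance_eq_sub hmem]
    simp only [Pi.pow_apply]
    rw [hm1, hm2]
  -- final algebra
  have hsub : Finset.Icc 1 n ⊆ Finset.range (n+1) := by
    intro x hx
    rw [Finset.mem_range, Nat.lt_succ_iff]
    exact (Finset.mem_Icc.mp hx).2
  have final : ∀ (κ α cc : ℝ) (θ : ℕ → ℝ),
      (∑ s ∈ Finset.range (n+1),
        ((κ + (if 1 ≤ s then θ s else 0)) - (α + cc * ((s:ℝ)/n)))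
          * (ℙ {ω | S ω = s}).toReal = 0) →
      (∑ s ∈ Finset.range (n+1), (s : ℝ) *
        (((κ + (if 1 ≤ s then θ s else 0)) - (α + cc * ((s:ℝ)/n)))
          * (ℙ {ω | S ω = s}).toReal) = 0) →
      cc = n * ∑ s ∈ Finset.Icc 1 n,
        θ s * (((s : ℝ) - ∫ ω, (S ω : ℝ)) * (ℙ {ω | S ω = s}).toReal /
          variance (fun ω => (S ω : ℝ)) ℙ) := by
    intro κ α cc θ hA hB
    have eA : ∑ s ∈ Finset.range (n+1),
        ((κ + (if 1 ≤ s then θ s else 0)) - (α + cc * ((s:ℝ)/n)))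
          * (ℙ {ω | S ω = s}).toReal
        = (κ - α) * (∑ s ∈ Finset.range (n+1), (ℙ {ω | S ω = s}).toReal)
          + (∑ s ∈ Finset.range (n+1),
              (if 1 ≤ s then θ s else 0) * (ℙ {ω | S ω = s}).toReal)
          - (cc/n) * (∑ s ∈ Finset.range (n+1), (s:ℝ) * (ℙ {ω | S ω = s}).toReal) := by
      rw [Finset.mul_sum, Finset.mul_sum, ← Finset.sum_add_distrib, ← Finset.sum_sub_distrib]
      apply Finset.sum_congr rfl
      intro s _
      ring
    have eB : ∑ s ∈ Finset.range (n+1), (s:ℝ) *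
        (((κ + (if 1 ≤ s then θ s else 0)) - (α + cc * ((s:ℝ)/n)))
          * (ℙ {ω | S ω = s}).toReal)
        = (κ - α) * (∑ s ∈ Finset.range (n+1), (s:ℝ) * (ℙ {ω | S ω = s}).toReal)
          + (∑ s ∈ Finset.range (n+1),
              (s:ℝ) * ((if 1 ≤ s then θ s else 0) * (ℙ {ω | S ω = s}).toReal))
          - (cc/n) * (∑ s ∈ Finset.range (n+1), (s:ℝ)^2 * (ℙ {ω | S ω = s}).toReal) := by
      rw [Finset.mul_sum, Finset.mul_sum, ← Finset.sum_add_distrib, ← Finset.sum_sub_distrib]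
      apply Finset.sum_congr rfl
      intro s _
      ring
    rw [eA, hπ1] at hA
    rw [eB] at hB
    have hTS : (∑ s ∈ Finset.range (n+1),
          (s:ℝ) * ((if 1 ≤ s then θ s else 0) * (ℙ {ω | S ω = s}).toReal))
        - (∑ s ∈ Finset.range (n+1), (s:ℝ) * (ℙ {ω | S ω = s}).toReal)
          * (∑ s ∈ Finset.range (n+1),
              (if 1 ≤ s then θ s else 0) * (ℙ {ω | S ω = s}).toReal)
        = (cc/n) * ((∑ s ∈ Finset.range (n+1), (s:ℝ)^2 * (ℙ {ω | S ω = s}).toReal)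
          - (∑ s ∈ Finset.range (n+1), (s:ℝ) * (ℙ {ω | S ω = s}).toReal)^2) := by
      linear_combination hB - (∑ s ∈ Finset.range (n+1),
        (s:ℝ) * (ℙ {ω | S ω = s}).toReal) * hA
    have e3 : ∑ s ∈ Finset.range (n+1), (if 1 ≤ s then θ s else 0) *
          (((s:ℝ) - ∑ t ∈ Finset.range (n+1), (t:ℝ) * (ℙ {ω | S ω = t}).toReal)
            * (ℙ {ω | S ω = s}).toReal)
        = (∑ s ∈ Finset.range (n+1),
            (s:ℝ) * ((if 1 ≤ s then θ s else 0) * (ℙ {ω | S ω = s}).toReal))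
          - (∑ s ∈ Finset.range (n+1), (s:ℝ) * (ℙ {ω | S ω = s}).toReal)
            * (∑ s ∈ Finset.range (n+1),
                (if 1 ≤ s then θ s else 0) * (ℙ {ω | S ω = s}).toReal) := by
      rw [Finset.mul_sum, ← Finset.sum_sub_distrib]
      apply Finset.sum_congr rfl
      intro s _
      ring
    have e4 : ∑ s ∈ Finset.range (n+1), (if 1 ≤ s then θ s else 0) *
          (((s:ℝ) - ∑ t ∈ Finset.range (n+1), (t:ℝ) * (ℙ {ω | S ω = t}).toReal)
            * (ℙ {ω | S ω = s}).toReal)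
        = ∑ s ∈ Finset.Icc 1 n, θ s *
          (((s:ℝ) - ∑ t ∈ Finset.range (n+1), (t:ℝ) * (ℙ {ω | S ω = t}).toReal)
            * (ℙ {ω | S ω = s}).toReal) := by
      rw [show (∑ s ∈ Finset.range (n+1), (if 1 ≤ s then θ s else 0) *
          (((s:ℝ) - ∑ t ∈ Finset.range (n+1), (t:ℝ) * (ℙ {ω | S ω = t}).toReal)
            * (ℙ {ω | S ω = s}).toReal))
          = ∑ s ∈ Finset.range (n+1), (if 1 ≤ s then θ s *
            (((s:ℝ) - ∑ t ∈ Finset.range (n+1), (t:ℝ) * (ℙ {ω | S ω = t}).toReal)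
              * (ℙ {ω | S ω = s}).toReal) else 0) from
        Finset.sum_congr rfl (fun s _ => by split_ifs <;> simp)]
      rw [← Finset.sum_subset hsub (fun x hx hnx => by
        have hx2 := Finset.mem_range.mp hx
        rw [if_neg]
        intro hge
        exact hnx (Finset.mem_Icc.mpr ⟨hge, Nat.lt_succ_iff.mp hx2⟩))]
      apply Finset.sum_congr rfl
      intro s hs
      rw [if_pos (Finset.mem_Icc.mp hs).1]
    rw [hm1, hVar]
    have hV0 : (∑ s ∈ Finset.range (n+1), (s : ℝ)^2 * (ℙ {ω | S ω = s}).toReal)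
        - (∑ s ∈ Finset.range (n+1), (s : ℝ) * (ℙ {ω | S ω = s}).toReal)^2 ≠ 0 := by
      rw [← hVar]
      exact ne_of_gt hvar
    have e5 : ∑ s ∈ Finset.Icc 1 n, θ s *
          (((s:ℝ) - ∑ t ∈ Finset.range (n+1), (t:ℝ) * (ℙ {ω | S ω = t}).toReal)
            * (ℙ {ω | S ω = s}).toReal /
            ((∑ s ∈ Finset.range (n+1), (s : ℝ)^2 * (ℙ {ω | S ω = s}).toReal)
              - (∑ s ∈ Finset.range (n+1), (s : ℝ) * (ℙ {ω | S ω = s}).toReal)^2))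
        = (∑ s ∈ Finset.Icc 1 n, θ s *
            (((s:ℝ) - ∑ t ∈ Finset.range (n+1), (t:ℝ) * (ℙ {ω | S ω = t}).toReal)
              * (ℙ {ω | S ω = s}).toReal)) /
          ((∑ s ∈ Finset.range (n+1), (s : ℝ)^2 * (ℙ {ω | S ω = s}).toReal)
            - (∑ s ∈ Finset.range (n+1), (s : ℝ) * (ℙ {ω | S ω = s}).toReal)^2) := by
      rw [Finset.sum_div]
      apply Finset.sum_congr rfl
      intro s _
      ring
    rw [e5, ← e4, e3, hTS]
    field_simp
  constructor
  · have hshape : ∀ s : ℕ, μm false s - ℓ false s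
        = (μ00 + (if 1 ≤ s then θ0 s else 0)) - (a + c0 * ((s:ℝ)/n)) := by
      intro s
      simp only [hμmdef, hℓdef, Bool.false_eq_true, if_false]
      ring
    apply final μ00 a c0 θ0
    · calc ∑ s ∈ Finset.range (n+1),
          ((μ00 + (if 1 ≤ s then θ0 s else 0)) - (a + c0 * ((s:ℝ)/n)))
            * (ℙ {ω | S ω = s}).toReal
          = ∑ s ∈ Finset.range (n+1), (μm false s - ℓ false s) * (ℙ {ω | S ω = s}).toReal :=
            Finset.sum_congr rfl (fun s _ => by rw [hshape s])
        _ = 0 := kA' false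
    · calc ∑ s ∈ Finset.range (n+1), (s:ℝ) *
          (((μ00 + (if 1 ≤ s then θ0 s else 0)) - (a + c0 * ((s:ℝ)/n)))
            * (ℙ {ω | S ω = s}).toReal)
          = ∑ s ∈ Finset.range (n+1), (s:ℝ) *
              ((μm false s - ℓ false s) * (ℙ {ω | S ω = s}).toReal) :=
            Finset.sum_congr rfl (fun s _ => by rw [hshape s])
        _ = 0 := kB' false
  · have hshape : ∀ s : ℕ, μm true s - ℓ true s
        = ((μ00 + τ0) + (if 1 ≤ s then θ1 s else 0)) - ((a + b) + c1 * ((s:ℝ)/n)) := by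
      intro s
      simp only [hμmdef, hℓdef, if_true]
      ring
    apply final (μ00 + τ0) (a + b) c1 θ1
    · calc ∑ s ∈ Finset.range (n+1),
          (((μ00 + τ0) + (if 1 ≤ s then θ1 s else 0)) - ((a + b) + c1 * ((s:ℝ)/n)))
            * (ℙ {ω | S ω = s}).toReal
          = ∑ s ∈ Finset.range (n+1), (μm true s - ℓ true s) * (ℙ {ω | S ω = s}).toReal :=
            Finset.sum_congr rfl (fun s _ => by rw [hshape s])
        _ = 0 := kA' true
    · calc ∑ s ∈ Finset.range (n+1), (s:ℝ) *
          ((((μ00 + τ0) + (if 1 ≤ s then θ1 s else 0)) - ((a + b) + c1 * ((s:ℝ)/n)))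
            * (ℙ {ω | S ω = s}).toReal)
          = ∑ s ∈ Finset.range (n+1), (s:ℝ) *
              ((μm true s - ℓ true s) * (ℙ {ω | S ω = s}).toReal) :=
            Finset.sum_congr rfl (fun s _ => by rw [hshape s])
        _ = 0 := kB' true
end
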